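/- arXiv:1211.2439 — 8 statements merged into one kernel-verified Lean document; each statement's English description precedes it below -/
import Mathlib

section
/- Let n ≥ 2 be an integer and a > 0. The improper integral ∫_a^∞ (sinh^{2n−2}(u) − sinh^{2n−2}(a))^{−1/2} du converges; consequently T(a) = sinh^{n−1}(a) · ∫_a^∞ (sinh^{2n−2}(u) − sinh^{2n−2}(a))^{−1/2} du is a finite positive real number. -/
open Real MeasureTheory Set

/-- `T n a = sinh^{n-1}(a) · ∫_a^∞ (sinh^{2n-2}(u) − sinh^{2n-2}(a))^{-1/2} du`. -/
noncomputable def T (n : ℕ) (a : ℝ) : ℝ :=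
  Real.sinh a ^ (n - 1) *
    ∫ u in Set.Ioi a,
      (Real.sinh u ^ (2 * n - 2) - Real.sinh a ^ (2 * n - 2)) ^ (-(1 : ℝ) / 2)

/-- Key lower bound: for `0 < a < u`, `(u-a)·sinh(a)^{m-1} ≤ sinh(u)^m − sinh(a)^m`. -/
lemma key_lb (m : ℕ) (hm : 1 ≤ m) {a u : ℝ} (ha : 0 < a) (hu : a < u) :
    (u - a) * Real.sinh a ^ (m - 1) ≤ Real.sinh u ^ m - Real.sinh a ^ m := by
  obtain ⟨k, rfl⟩ : ∃ k, m = k + 1 := ⟨m - 1, by omega⟩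
  simp only [Nat.add_sub_cancel]
  have hsa : 0 < Real.sinh a := Real.sinh_pos_iff.2 ha
  have hsu : Real.sinh a < Real.sinh u := Real.sinh_lt_sinh.2 hu
  have hk : Real.sinh a ^ k ≤ Real.sinh u ^ k := pow_le_pow_left₀ hsa.le hsu.le k
  have hkp : 0 < Real.sinh a ^ k := pow_pos hsa k
  have hid : u - a ≤ Real.sinh u - Real.sinh a := by
    have := Real.sinh_sub_id_strictMono.monotone hu.le
    linarith
  rw [pow_succ, pow_succ]
  nlinarith [mul_le_mul_of_nonneg_right hk (hsa.trans hsu).le,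
    mul_le_mul_of_nonneg_left hid hkp.le]

/-- For an integer `n ≥ 2` and `a > 0`, the improper integral
`∫_a^∞ (sinh^{2n-2}(u) − sinh^{2n-2}(a))^{-1/2} du` converges; consequently
`T(a)` is a finite positive real number. -/
theorem T_integrable_and_pos (n : ℕ) (hn : 2 ≤ n) (a : ℝ) (ha : 0 < a) :
    MeasureTheory.IntegrableOn
        (fun u : ℝ =>
          (Real.sinh u ^ (2 * n - 2) - Real.sinh a ^ (2 * n - 2)) ^ (-(1 : ℝ) / 2))
        (Set.Ioi a) ∧
      0 < T n a := by
  set m : ℕ := 2 * n - 2 with hm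
  have hm2 : 2 ≤ m := by omega
  set f : ℝ → ℝ := fun u =>
    (Real.sinh u ^ m - Real.sinh a ^ m) ^ (-(1 : ℝ) / 2) with hf
  have hsa : 0 < Real.sinh a := Real.sinh_pos_iff.2 ha
  have hDpos : ∀ u, a < u → 0 < Real.sinh u ^ m - Real.sinh a ^ m := by
    intro u hu
    have h1 := key_lb m (by omega) ha hu
    have h2 : 0 < (u - a) * Real.sinh a ^ (m - 1) := by
      apply mul_pos (by linarith) (pow_pos hsa _)
    linarith
  have hfpos : ∀ u, a < u → 0 < f u := fun u hu =>
    Real.rpow_pos_of_pos (hDpos u hu) _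
  have hmeas : Measurable f := by measurability
  -- integrability near `a`
  have hnear : IntegrableOn f (Ioc a (a + 1)) := by
    have hii : IntervalIntegrable (fun x : ℝ => (x - a) ^ (-(1 : ℝ) / 2)) volume a (a + 1) := by
      have h0 := (intervalIntegral.intervalIntegrable_rpow'
        (a := 0) (b := 1) (r := -(1 : ℝ) / 2) (by norm_num)).comp_sub_right a
      simpa [zero_add, add_comm] using h0
    have hg : IntegrableOn
        (fun x : ℝ => (Real.sinh a ^ (m - 1)) ^ (-(1 : ℝ) / 2) * (x - a) ^ (-(1 : ℝ) / 2))
        (Ioc a (a + 1)) := (hii.1).const_mul _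
    apply hg.integrable.mono' (hmeas.aestronglyMeasurable)
    filter_upwards [ae_restrict_mem measurableSet_Ioc] with u hu
    have hau : a < u := hu.1
    have hD := hDpos u hau
    rw [Real.norm_eq_abs, abs_of_nonneg (Real.rpow_nonneg hD.le _)]
    have h1 := key_lb m (by omega) ha hau
    have h2 : 0 < (u - a) * Real.sinh a ^ (m - 1) :=
      mul_pos (by linarith) (pow_pos hsa _)
    calc f u ≤ ((u - a) * Real.sinh a ^ (m - 1)) ^ (-(1 : ℝ) / 2) :=
          Real.rpow_le_rpow_of_nonpos h2 h1 (by norm_num)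
      _ = (Real.sinh a ^ (m - 1)) ^ (-(1 : ℝ) / 2) * (u - a) ^ (-(1 : ℝ) / 2) := by
          rw [Real.mul_rpow (by linarith) (pow_pos hsa _).le, mul_comm]
  -- integrability on the tail
  have hone_le : (1 : ℝ) ≤ Real.sinh (a + 1) := by
    have h1 : (1 : ℝ) ≤ Real.sinh 1 := Real.self_le_sinh_iff.2 zero_le_one
    have h2 : Real.sinh 1 ≤ Real.sinh (a + 1) := Real.sinh_le_sinh.2 (by linarith)
    linarith
  set c : ℝ := (1 - Real.sinh a / Real.sinh (a + 1)) / 16 with hc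
  have hr1 : Real.sinh a / Real.sinh (a + 1) < 1 := by
    rw [div_lt_one (by linarith)]
    exact Real.sinh_lt_sinh.2 (by linarith)
  have hcpos : 0 < c := by rw [hc]; linarith
  have htail : IntegrableOn f (Ioi (a + 1)) := by
    have hexp : IntegrableOn (fun x : ℝ => Real.exp (-1 * x)) (Ioi (a + 1)) :=
      exp_neg_integrableOn_Ioi (a + 1) one_pos
    have hg : IntegrableOn
        (fun x : ℝ => c ^ (-(1 : ℝ) / 2) * Real.exp (-1 * x)) (Ioi (a + 1)) :=
      hexp.const_mul _
    apply hg.integrable.mono' (hmeas.aestronglyMeasurable)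
    filter_upwards [ae_restrict_mem measurableSet_Ioi] with u hu
    simp only [mem_Ioi] at hu
    have hau : a < u := by linarith
    have hD := hDpos u hau
    rw [Real.norm_eq_abs, abs_of_nonneg (Real.rpow_nonneg hD.le _)]
    -- lower bound `D ≥ c * exp(u)^2`
    have h1u : (1 : ℝ) ≤ u := by linarith
    have hsu1 : Real.sinh (a + 1) ≤ Real.sinh u := Real.sinh_le_sinh.2 hu.le
    have hsupos : (1 : ℝ) ≤ Real.sinh u := hone_le.trans hsu1
    -- sinh a ^ m ≤ (sinh a / sinh(a+1)) * sinh u ^ m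
    have stepA : Real.sinh a ^ m ≤ Real.sinh a / Real.sinh (a + 1) * Real.sinh u ^ m := by
      obtain ⟨k, hk⟩ : ∃ k, m = k + 1 := ⟨m - 1, by omega⟩
      rw [hk, pow_succ, pow_succ, div_mul_eq_mul_div, le_div_iff₀ (by linarith)]
      have hk1 : Real.sinh a ^ k ≤ Real.sinh u ^ k :=
        pow_le_pow_left₀ hsa.le (Real.sinh_lt_sinh.2 hau).le k
      have hkp : 0 < Real.sinh a ^ k := pow_pos hsa k
      nlinarith [mul_le_mul hk1 hsu1 (by linarith) (by positivity : (0:ℝ) ≤ Real.sinh u ^ k),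
        mul_pos hkp hsa]
    have stepB : Real.sinh u ^ 2 ≤ Real.sinh u ^ m := pow_le_pow_right₀ hsupos hm2
    have stepC : Real.exp u / 4 ≤ Real.sinh u := by
      have he1 : Real.exp (-u) ≤ 1 := Real.exp_le_one_iff.2 (by linarith)
      have he2 : (2 : ℝ) ≤ Real.exp u := by
        have := Real.add_one_le_exp (1 : ℝ)
        have h3 : Real.exp 1 ≤ Real.exp u := Real.exp_le_exp.2 h1u
        linarith
      rw [Real.sinh_eq]; linarith
    have hDge : c * Real.exp u ^ 2 ≤ Real.sinh u ^ m - Real.sinh a ^ m := by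
      have hq : c * Real.exp u ^ 2 ≤
          (1 - Real.sinh a / Real.sinh (a + 1)) * Real.sinh u ^ 2 := by
        rw [hc]
        have h4 : (Real.exp u / 4) ^ 2 ≤ Real.sinh u ^ 2 :=
          pow_le_pow_left₀ (by positivity) stepC 2
        have h5 : (0:ℝ) ≤ 1 - Real.sinh a / Real.sinh (a + 1) := by linarith
        calc (1 - Real.sinh a / Real.sinh (a + 1)) / 16 * Real.exp u ^ 2
            = (1 - Real.sinh a / Real.sinh (a + 1)) * (Real.exp u / 4) ^ 2 := by ring
          _ ≤ (1 - Real.sinh a / Real.sinh (a + 1)) * Real.sinh u ^ 2 :=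
              mul_le_mul_of_nonneg_left h4 h5
      have h6 : (1 - Real.sinh a / Real.sinh (a + 1)) * Real.sinh u ^ 2 ≤
          (1 - Real.sinh a / Real.sinh (a + 1)) * Real.sinh u ^ m :=
        mul_le_mul_of_nonneg_left stepB (by linarith)
      nlinarith [stepA]
    have hcemul : 0 < c * Real.exp u ^ 2 := by positivity
    calc f u ≤ (c * Real.exp u ^ 2) ^ (-(1 : ℝ) / 2) :=
          Real.rpow_le_rpow_of_nonpos hcemul hDge (by norm_num)
      _ = c ^ (-(1 : ℝ) / 2) * (Real.exp u ^ 2) ^ (-(1 : ℝ) / 2) :=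
          Real.mul_rpow hcpos.le (by positivity)
      _ = c ^ (-(1 : ℝ) / 2) * Real.exp (-1 * u) := by
          congr 1
          rw [← Real.rpow_natCast (Real.exp u) 2, ← Real.rpow_mul (Real.exp_pos u).le,
            Real.rpow_def_of_pos (Real.exp_pos u), Real.log_exp]
          norm_num
  have hint : IntegrableOn f (Ioi a) := by
    rw [← Ioc_union_Ioi_eq_Ioi (by linarith : a ≤ a + 1)]
    exact hnear.union htail
  refine ⟨hint, ?_⟩
  -- positivity of T
  have hIpos : 0 < ∫ u in Ioi a, f u := by
    have hnn : 0 ≤ᶠ[ae (volume.restrict (Ioi a))] f := by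
      filter_upwards [ae_restrict_mem measurableSet_Ioi] with u hu
      exact (hfpos u hu).le
    rw [setIntegral_pos_iff_support_of_nonneg_ae hnn hint]
    have hsub : Ioi a ⊆ Function.support f ∩ Ioi a := fun u hu =>
      ⟨(hfpos u hu).ne', hu⟩
    have hle : volume (Ioi a) ≤ volume (Function.support f ∩ Ioi a) := measure_mono hsub
    rw [Real.volume_Ioi] at hle
    exact lt_of_lt_of_le (by simp) hle
  exact mul_pos (pow_pos hsa (n - 1)) hIpos
end

section
/- Let n ≥ 2 be an integer and a > 0, and let f(a,·) be the maximal solution of f'' = (n−1)(1+(f')²)·coth(f), f(0) = a, f'(0) = 0, defined on I_a = (−T(a), T(a)). Then the restriction of f(a,·) to [0, T(a)) is a bijection from [0, T(a)) onto [a, ∞), and its inverse function is λ(a,·) given by λ(a,ρ) = sinh^{n−1}(a) · ∫_a^ρ (sinh^{2n−2}(u) − sinh^{2n−2}(a))^{−1/2} du for ρ ∈ [a, ∞); that is, f(a, λ(a,ρ)) = ρ for every ρ ≥ a and λ(a, f(a,t)) = t for every t ∈ [0, T(a)). -/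
/-- `f` solves the catenary ODE `f'' = (n-1)(1+(f')²) coth(f)` on the set `I`,
with initial conditions `f(0) = a`, `f'(0) = 0`. -/
def IsCatenarySolOn (n : ℕ) (a : ℝ) (I : Set ℝ) (f : ℝ → ℝ) : Prop :=
  (0 : ℝ) ∈ I ∧ f 0 = a ∧ deriv f 0 = 0 ∧
    ∀ t ∈ I, HasDerivAt f (deriv f t) t ∧
      HasDerivAt (deriv f)
        (((n : ℝ) - 1) * (1 + deriv f t ^ 2) * (Real.cosh (f t) / Real.sinh (f t))) t

/-- `lam n a ρ = sinh^{n-1}(a) · ∫_a^ρ (sinh^{2n-2}(u) − sinh^{2n-2}(a))^{-1/2} du`. -/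
noncomputable def lam (n : ℕ) (a : ℝ) (ρ : ℝ) : ℝ :=
  Real.sinh a ^ (n - 1) *
    ∫ u in a..ρ,
      (Real.sinh u ^ (2 * n - 2) - Real.sinh a ^ (2 * n - 2)) ^ (-(1 : ℝ) / 2)

open Real MeasureTheory Set Filter intervalIntegral Topology

namespace CatAux

/-- The integrand. -/
noncomputable def gg (n : ℕ) (a u : ℝ) : ℝ :=
  (Real.sinh u ^ (2 * n - 2) - Real.sinh a ^ (2 * n - 2)) ^ (-(1 : ℝ) / 2)

variable {n : ℕ} {a : ℝ}

lemma base_nonneg (ha : 0 < a) {u : ℝ} (h : a ≤ u) :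
    0 ≤ Real.sinh u ^ (2 * n - 2) - Real.sinh a ^ (2 * n - 2) :=
  sub_nonneg.2 (pow_le_pow_left₀ (Real.sinh_pos_iff.2 ha).le (Real.sinh_le_sinh.2 h) _)

lemma base_pos (hn : 2 ≤ n) (ha : 0 < a) {u : ℝ} (h : a < u) :
    0 < Real.sinh u ^ (2 * n - 2) - Real.sinh a ^ (2 * n - 2) :=
  sub_pos.2 (pow_lt_pow_left₀ (Real.sinh_lt_sinh.2 h) (Real.sinh_pos_iff.2 ha).le (by omega))

lemma gg_nonneg (ha : 0 < a) {u : ℝ} (h : a ≤ u) : 0 ≤ gg n a u :=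
  Real.rpow_nonneg (base_nonneg ha h) _

lemma gg_pos (hn : 2 ≤ n) (ha : 0 < a) {u : ℝ} (h : a < u) : 0 < gg n a u :=
  Real.rpow_pos_of_pos (base_pos hn ha h) _

lemma gg_meas : Measurable (gg n a) :=
  (((Real.continuous_sinh.pow _).sub continuous_const).measurable).pow_const _

/-- lower bound for the base via MVT. -/
lemma base_lb (hn : 2 ≤ n) (ha : 0 < a) {u : ℝ} (h : a ≤ u) :
    ((2 * n - 2 : ℕ) : ℝ) * Real.sinh a ^ (2 * n - 2 - 1) * (u - a) ≤
      Real.sinh u ^ (2 * n - 2) - Real.sinh a ^ (2 * n - 2) := by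
  set k := 2 * n - 2 with hk
  set C := (k : ℝ) * Real.sinh a ^ (k - 1) with hC
  have hmono : MonotoneOn (fun x => Real.sinh x ^ k - C * x) (Ici a) := by
    have hder : ∀ x : ℝ, HasDerivAt (fun x => Real.sinh x ^ k - C * x)
        ((k : ℝ) * Real.sinh x ^ (k - 1) * Real.cosh x - C) x := by
      intro x
      have h1 : HasDerivAt (fun x => Real.sinh x ^ k)
          ((k : ℝ) * Real.sinh x ^ (k - 1) * Real.cosh x) x :=
        (Real.hasDerivAt_sinh x).pow k
      have h2 : HasDerivAt (fun x : ℝ => C * x) C x := by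
        simpa using (hasDerivAt_id x).const_mul C
      exact h1.sub h2
    apply monotoneOn_of_deriv_nonneg (convex_Ici a)
      (fun x _ => (hder x).differentiableAt.continuousAt.continuousWithinAt)
      (fun x hx => ((hder x).differentiableAt.differentiableWithinAt))
    intro x hx
    rw [interior_Ici] at hx
    rw [(hder x).deriv]
    have hsa : (0:ℝ) ≤ Real.sinh a := (Real.sinh_pos_iff.2 ha).le
    have h1 : Real.sinh a ^ (k-1) ≤ Real.sinh x ^ (k-1) :=
      pow_le_pow_left₀ hsa (Real.sinh_le_sinh.2 (le_of_lt hx)) _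
    have h2 : (1:ℝ) ≤ Real.cosh x := Real.one_le_cosh x
    have h3 : (0:ℝ) ≤ Real.sinh x ^ (k-1) :=
      pow_nonneg (le_trans hsa (Real.sinh_le_sinh.2 (le_of_lt hx))) _
    nlinarith [mul_le_mul h1 h2 zero_le_one h3]
  have := hmono (self_mem_Ici) (mem_Ici.2 h) h
  simp only at this
  linarith [this]


lemma C_pos (hn : 2 ≤ n) (ha : 0 < a) :
    0 < ((2 * n - 2 : ℕ) : ℝ) * Real.sinh a ^ (2 * n - 2 - 1) := by
  have : (0:ℝ) < Real.sinh a := Real.sinh_pos_iff.2 ha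
  have h2 : 0 < 2 * n - 2 := by omega
  positivity

lemma integrableOn_gg_Ioc (hn : 2 ≤ n) (ha : 0 < a) :
    IntegrableOn (gg n a) (Ioc a (a + 1)) := by
  set C := ((2 * n - 2 : ℕ) : ℝ) * Real.sinh a ^ (2 * n - 2 - 1) with hCdef
  have hC := C_pos hn ha
  -- majorant
  have hmaj : IntegrableOn (fun u => C ^ (-(1:ℝ)/2) * (u - a) ^ (-(1:ℝ)/2)) (Ioc a (a+1)) := by
    have h1 : IntervalIntegrable (fun x : ℝ => x ^ (-(1:ℝ)/2)) volume 0 1 :=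
      intervalIntegral.intervalIntegrable_rpow' (by norm_num)
    have h2 : IntervalIntegrable (fun x : ℝ => (x - a) ^ (-(1:ℝ)/2)) volume a (a+1) := by
      simpa [add_comm] using h1.comp_sub_right a
    exact (h2.const_mul _).1
  apply Integrable.mono' hmaj (gg_meas.aestronglyMeasurable)
  rw [ae_restrict_iff' measurableSet_Ioc]
  refine ae_of_all _ fun u hu => ?_
  have hau : a < u := hu.1
  have hbase : C * (u - a) ≤ Real.sinh u ^ (2*n-2) - Real.sinh a ^ (2*n-2) := base_lb hn ha hau.le
  have hCu : 0 < C * (u - a) := mul_pos hC (by linarith)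
  rw [Real.norm_of_nonneg (gg_nonneg ha hau.le)]
  calc gg n a u ≤ (C * (u - a)) ^ (-(1:ℝ)/2) :=
        Real.rpow_le_rpow_of_nonpos hCu hbase (by norm_num)
    _ = C ^ (-(1:ℝ)/2) * (u - a) ^ (-(1:ℝ)/2) := Real.mul_rpow hC.le (by linarith)

lemma integrableOn_gg_Ioi' (hn : 2 ≤ n) (ha : 0 < a) :
    IntegrableOn (gg n a) (Ioi (a + 1)) := by
  set k := 2 * n - 2 with hk
  have hsa : (0:ℝ) < Real.sinh a := Real.sinh_pos_iff.2 ha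
  have hsa1 : Real.sinh a < Real.sinh (a + 1) := Real.sinh_lt_sinh.2 (by linarith)
  set r := Real.sinh a ^ k / Real.sinh (a+1) ^ k with hr
  have hr0 : 0 < r := by positivity
  have hr1 : r < 1 := by
    rw [hr, div_lt_one (by positivity)]
    exact pow_lt_pow_left₀ hsa1 hsa.le (by omega)
  set M := (1 - r) ^ (-(1:ℝ)/2) * (4:ℝ) ^ ((k:ℝ)/2) with hM
  have hmaj : IntegrableOn (fun u => M * Real.exp (-u)) (Ioi (a+1)) := by
    have := (exp_neg_integrableOn_Ioi (a+1) (zero_lt_one (α := ℝ))).const_mul M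
    simpa [IntegrableOn] using this
  apply Integrable.mono' hmaj (gg_meas.aestronglyMeasurable)
  rw [ae_restrict_iff' measurableSet_Ioi]
  refine ae_of_all _ fun u hu => ?_
  have hau : a < u := by have := mem_Ioi.1 hu; linarith
  have hu1 : (1:ℝ) ≤ u := by have := mem_Ioi.1 hu; linarith
  have hupos : (0:ℝ) < u := by linarith
  -- sinh u ≥ exp u / 4
  have hexp2 : (2:ℝ) ≤ Real.exp u := by
    calc (2:ℝ) ≤ 1 + 1 := by norm_num
    _ ≤ Real.exp 1 := by have := Real.add_one_le_exp (1:ℝ); linarith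
    _ ≤ Real.exp u := Real.exp_le_exp.2 hu1
  have hsinh_lb : Real.exp u / 4 ≤ Real.sinh u := by
    rw [Real.sinh_eq]
    have h1 : Real.exp (-u) ≤ 1 := Real.exp_le_one_iff.2 (by linarith)
    linarith
  have hq : (0:ℝ) < Real.exp u / 4 := by positivity
  -- base lower bound
  have hb1 : Real.sinh a ^ k ≤ r * Real.sinh u ^ k := by
    rw [hr, div_mul_eq_mul_div, le_div_iff₀ (by positivity)]
    have : Real.sinh (a+1) ^ k ≤ Real.sinh u ^ k :=
      pow_le_pow_left₀ (by positivity) (Real.sinh_le_sinh.2 (mem_Ioi.1 hu).le) _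
    nlinarith [pow_pos hsa k]
  have hb2 : (1 - r) * (Real.exp u / 4) ^ k ≤ Real.sinh u ^ k - Real.sinh a ^ k := by
    have h1 : (Real.exp u / 4) ^ k ≤ Real.sinh u ^ k := pow_le_pow_left₀ hq.le hsinh_lb _
    nlinarith [pow_pos hq k]
  have hb2pos : (0:ℝ) < (1 - r) * (Real.exp u / 4) ^ k := by
    have : (0:ℝ) < 1 - r := by linarith
    positivity
  rw [Real.norm_of_nonneg (gg_nonneg ha hau.le)]
  calc gg n a u ≤ ((1 - r) * (Real.exp u / 4) ^ k) ^ (-(1:ℝ)/2) :=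
        Real.rpow_le_rpow_of_nonpos hb2pos hb2 (by norm_num)
    _ = (1 - r) ^ (-(1:ℝ)/2) * ((Real.exp u / 4) ^ k) ^ (-(1:ℝ)/2) :=
        Real.mul_rpow (by linarith) (by positivity)
    _ ≤ M * Real.exp (-u) := by
        rw [hM, mul_assoc]
        apply mul_le_mul_of_nonneg_left _ (Real.rpow_nonneg (by linarith) _)
        -- ((exp u / 4)^k)^(-1/2) ≤ 4^(k/2) * exp (-u)
        have h1 : ((Real.exp u / 4) ^ k : ℝ) ^ (-(1:ℝ)/2)
            = (Real.exp u / 4) ^ ((k:ℝ) * (-(1:ℝ)/2)) := by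
          rw [← Real.rpow_natCast (Real.exp u / 4) k, ← Real.rpow_mul hq.le]
        rw [h1, Real.div_rpow (Real.exp_pos u).le (by norm_num)]
        rw [div_le_iff₀ (by positivity)]
        have h4 : (4:ℝ) ^ ((k:ℝ)/2) * (4:ℝ) ^ ((k:ℝ) * (-(1:ℝ)/2)) = 1 := by
          have he : (k:ℝ)/2 + (k:ℝ) * (-(1:ℝ)/2) = 0 := by ring
          rw [← Real.rpow_add (by norm_num : (0:ℝ) < 4), he, Real.rpow_zero]
        have hk2 : (2:ℝ) ≤ (k:ℝ) := by exact_mod_cast (by omega : 2 ≤ k)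
        have h5 : Real.exp u ^ ((k:ℝ) * (-(1:ℝ)/2)) ≤ Real.exp (-u) := by
          rw [Real.rpow_def_of_pos (Real.exp_pos u), Real.log_exp, Real.exp_le_exp]
          nlinarith
        calc Real.exp u ^ ((k:ℝ) * (-(1:ℝ)/2)) ≤ Real.exp (-u) := h5
          _ = 4 ^ ((k:ℝ)/2) * 4 ^ ((k:ℝ) * (-(1:ℝ)/2)) * Real.exp (-u) := by
              rw [h4, one_mul]
          _ = 4 ^ ((k:ℝ)/2) * Real.exp (-u) * 4 ^ ((k:ℝ) * (-(1:ℝ)/2)) := by ring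


lemma integrableOn_gg_Ioi (hn : 2 ≤ n) (ha : 0 < a) : IntegrableOn (gg n a) (Ioi a) := by
  rw [← Set.Ioc_union_Ioi_eq_Ioi (by linarith : a ≤ a + 1)]
  exact (integrableOn_gg_Ioc hn ha).union (integrableOn_gg_Ioi' hn ha)

lemma intervalIntegrable_gg (hn : 2 ≤ n) (ha : 0 < a) {x y : ℝ} (hx : a ≤ x) (hy : a ≤ y) :
    IntervalIntegrable (gg n a) volume x y := by
  rw [intervalIntegrable_iff]
  exact (integrableOn_gg_Ioi hn ha).mono_set
    (fun u hu => mem_Ioi.2 (lt_of_le_of_lt (le_min hx hy) hu.1))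

/-- `lam` in terms of `gg`. -/
lemma lam_eq (n : ℕ) (a ρ : ℝ) : lam n a ρ = Real.sinh a ^ (n-1) * ∫ u in a..ρ, gg n a u := rfl

lemma T_eq (n : ℕ) (a : ℝ) : T n a = Real.sinh a ^ (n-1) * ∫ u in Set.Ioi a, gg n a u := rfl


lemma sinh_pow_pos (ha : 0 < a) : 0 < Real.sinh a ^ (n - 1) :=
  pow_pos (Real.sinh_pos_iff.2 ha) _

lemma lam_self : lam n a a = 0 := by
  rw [lam]; simp

lemma lam_nonneg (hn : 2 ≤ n) (ha : 0 < a) {ρ : ℝ} (hρ : a ≤ ρ) : 0 ≤ lam n a ρ := by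
  rw [lam_eq]
  exact mul_nonneg (sinh_pow_pos ha).le
    (intervalIntegral.integral_nonneg hρ (fun u hu => gg_nonneg ha hu.1))

lemma lam_strictMonoOn (hn : 2 ≤ n) (ha : 0 < a) : StrictMonoOn (lam n a) (Ici a) := by
  intro x hx y hy hxy
  rw [lam_eq, lam_eq]
  apply mul_lt_mul_of_pos_left _ (sinh_pow_pos ha)
  have h1 : IntervalIntegrable (gg n a) volume a x := intervalIntegrable_gg hn ha le_rfl hx
  have h2 : IntervalIntegrable (gg n a) volume x y := intervalIntegrable_gg hn ha hx (hx.trans hxy.le)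
  rw [← intervalIntegral.integral_add_adjacent_intervals h1 h2]
  have hpos : 0 < ∫ u in x..y, gg n a u :=
    intervalIntegral.intervalIntegral_pos_of_pos_on h2
      (fun u hu => gg_pos hn ha (lt_of_le_of_lt hx hu.1)) hxy
  linarith

lemma lam_lt_T (hn : 2 ≤ n) (ha : 0 < a) {ρ : ℝ} (hρ : a ≤ ρ) : lam n a ρ < T n a := by
  rw [lam_eq, T_eq]
  apply mul_lt_mul_of_pos_left _ (sinh_pow_pos ha)
  have h1 : IntegrableOn (gg n a) (Ioc a ρ) :=
    (integrableOn_gg_Ioi hn ha).mono_set Set.Ioc_subset_Ioi_self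
  have h2 : IntegrableOn (gg n a) (Ioi ρ) :=
    (integrableOn_gg_Ioi hn ha).mono_set (Set.Ioi_subset_Ioi hρ)
  have hsplit : ∫ u in Set.Ioi a, gg n a u
      = (∫ u in Set.Ioc a ρ, gg n a u) + ∫ u in Set.Ioi ρ, gg n a u := by
    rw [← MeasureTheory.setIntegral_union (Set.Ioc_disjoint_Ioi le_rfl) measurableSet_Ioi h1 h2,
      Set.Ioc_union_Ioi_eq_Ioi hρ]
  have htail : 0 < ∫ u in Set.Ioi ρ, gg n a u := by
    rw [MeasureTheory.setIntegral_pos_iff_support_of_nonneg_ae _ h2]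
    · have hsub : Set.Ioi ρ ⊆ Function.support (gg n a) :=
        fun u hu => (gg_pos hn ha (lt_of_le_of_lt hρ (mem_Ioi.1 hu))).ne'
      rw [Set.inter_eq_self_of_subset_right hsub]
      simp
    · filter_upwards [MeasureTheory.ae_restrict_mem measurableSet_Ioi] with u hu
      exact gg_nonneg ha (hρ.trans (mem_Ioi.1 hu).le)
  rw [intervalIntegral.integral_of_le hρ, hsplit]
  linarith

lemma hasDerivAt_lam (hn : 2 ≤ n) (ha : 0 < a) {ρ : ℝ} (hρ : a < ρ) :
    HasDerivAt (lam n a) (Real.sinh a ^ (n-1) * gg n a ρ) ρ := by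
  have hprim : HasDerivAt (fun x => ∫ u in a..x, gg n a u) (gg n a ρ) ρ := by
    apply intervalIntegral.integral_hasDerivAt_right
      (intervalIntegrable_gg hn ha le_rfl hρ.le)
      ⟨Set.univ, Filter.univ_mem, gg_meas.aestronglyMeasurable⟩
    -- ContinuousAt
    have hb : ContinuousAt (fun u => Real.sinh u ^ (2*n-2) - Real.sinh a ^ (2*n-2)) ρ :=
      ((Real.continuous_sinh.pow _).sub continuous_const).continuousAt
    exact hb.rpow_const (Or.inl (base_pos hn ha hρ).ne')
  exact hprim.const_mul (Real.sinh a ^ (n-1))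

lemma lam_continuousWithinAt (hn : 2 ≤ n) (ha : 0 < a) :
    ContinuousWithinAt (lam n a) (Ici a) a := by
  have h1 : ContinuousWithinAt (fun x => ∫ u in a..x, gg n a u) (Icc a (a+1)) a :=
    intervalIntegral.continuousWithinAt_primitive (measure_singleton a)
      (intervalIntegrable_gg hn ha (by simp) (le_max_of_le_right (by linarith)))
  have hmem : Icc a (a+1) ∈ 𝓝[Ici a] a := by
    rw [← Set.Ici_inter_Iic]
    exact Filter.inter_mem self_mem_nhdsWithin
      (mem_nhdsWithin_of_mem_nhds (Iic_mem_nhds (by linarith)))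
  have h2 : ContinuousWithinAt (fun ρ => Real.sinh a ^ (n-1) * ∫ u in a..ρ, gg n a u)
      (Icc a (a+1)) a := h1.const_mul _
  exact h2.mono_of_mem_nhdsWithin hmem


lemma energy (hn : 2 ≤ n) (ha : 0 < a) {f : ℝ → ℝ} {Tv : ℝ}
    (hf0 : f 0 = a) (hd0 : deriv f 0 = 0)
    (hode : ∀ s ∈ Set.Ioo (-Tv) Tv, HasDerivAt f (deriv f s) s ∧
      HasDerivAt (deriv f)
        (((n:ℝ)-1) * (1 + deriv f s ^ 2) * (Real.cosh (f s) / Real.sinh (f s))) s)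
    {t : ℝ} (ht0 : 0 ≤ t) (htT : t < Tv)
    (hpos : ∀ s ∈ Icc 0 t, 0 < f s) :
    (1 + deriv f t ^ 2) * Real.sinh a ^ (2*n-2) = Real.sinh (f t) ^ (2*n-2) := by
  set k := 2*n-2 with hkdef
  have hk1 : k - 1 + 1 = k := by omega
  have hcast : ((k : ℕ) : ℝ) = 2*((n:ℝ)-1) := by
    rw [hkdef]
    push_cast [Nat.cast_sub (by omega : 2 ≤ 2*n)]
    ring
  set E := fun s => (1 + deriv f s ^ 2) / Real.sinh (f s) ^ k with hEdef
  have hE : ∀ s ∈ Icc 0 t, HasDerivAt E 0 s := by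
    intro s hs
    have hsI : s ∈ Set.Ioo (-Tv) Tv := ⟨by linarith [hs.1], lt_of_le_of_lt hs.2 htT⟩
    obtain ⟨h1, h2⟩ := hode s hsI
    have hfs := hpos s hs
    have hS : 0 < Real.sinh (f s) := Real.sinh_pos_iff.2 hfs
    have hnum : HasDerivAt (fun x => 1 + deriv f x ^ 2)
        (((2:ℕ):ℝ) * deriv f s ^ (2-1) *
          (((n:ℝ)-1) * (1 + deriv f s ^ 2) * (Real.cosh (f s)/Real.sinh (f s)))) s :=
      (h2.pow 2).const_add 1
    have hsinhf : HasDerivAt (fun x => Real.sinh (f x)) (Real.cosh (f s) * deriv f s) s :=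
      (Real.hasDerivAt_sinh (f s)).comp s h1
    have hden : HasDerivAt (fun x => Real.sinh (f x) ^ k)
        (((k:ℕ):ℝ) * Real.sinh (f s) ^ (k-1) * (Real.cosh (f s) * deriv f s)) s :=
      hsinhf.pow k
    have hq := hnum.div hden (pow_ne_zero _ hS.ne')
    refine hq.congr_deriv ?_
    rw [div_eq_zero_iff]
    left
    have e1 : Real.sinh (f s) ^ k = Real.sinh (f s) ^ (k-1) * Real.sinh (f s) := by
      rw [← pow_succ, hk1]
    rw [hcast, e1]
    field_simp
    ring
  have hcont : ContinuousOn E (Icc 0 t) :=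
    fun s hs => ((hE s hs).differentiableAt.continuousAt.continuousWithinAt)
  have hEc := constant_of_has_deriv_right_zero hcont
    (fun s hs => (hE s (Ico_subset_Icc_self hs)).hasDerivWithinAt) t (right_mem_Icc.2 ht0)
  have hE0 : E 0 = 1 / Real.sinh a ^ k := by
    rw [hEdef]
    simp [hd0, hf0]
  rw [hE0] at hEc
  have hft : 0 < f t := hpos t (right_mem_Icc.2 ht0)
  have hSt : (0:ℝ) < Real.sinh (f t) ^ k := pow_pos (Real.sinh_pos_iff.2 hft) _
  have hA : (0:ℝ) < Real.sinh a ^ k := pow_pos (Real.sinh_pos_iff.2 ha) _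
  have : (1 + deriv f t ^ 2) / Real.sinh (f t) ^ k = 1 / Real.sinh a ^ k := hEc
  rw [div_eq_div_iff hSt.ne' hA.ne'] at this
  linarith

end CatAux

open CatAux

/-- The restriction of the maximal solution `f(a,·)` to `[0, T(a))` is a bijection
onto `[a, ∞)`, with inverse function `λ(a,·)` given by
`λ(a,ρ) = sinh^{n-1}(a) · ∫_a^ρ (sinh^{2n-2}(u) − sinh^{2n-2}(a))^{-1/2} du`. -/
theorem catenary_bijection (n : ℕ) (hn : 2 ≤ n) (a : ℝ) (ha : 0 < a) (f : ℝ → ℝ)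
    (hf : IsCatenarySolOn n a (Set.Ioo (-(T n a)) (T n a)) f) :
    Set.BijOn f (Set.Ico (0 : ℝ) (T n a)) (Set.Ici a) ∧
      (∀ ρ : ℝ, a ≤ ρ → f (lam n a ρ) = ρ) ∧
      (∀ t ∈ Set.Ico (0 : ℝ) (T n a), lam n a (f t) = t) := by
  obtain ⟨hI0, hf0, hd0, hode⟩ := hf
  set Tv := T n a with hTv
  have hT : 0 < Tv := (Set.mem_Ioo.1 hI0).2
  have hsa : 0 < Real.sinh a := Real.sinh_pos_iff.2 ha
  have hfcont : ∀ s ∈ Set.Ioo (-Tv) Tv, ContinuousAt f s :=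
    fun s hs => ((hode s hs).1).continuousAt
  -- Step 1: f ≥ a on [0, Tv)
  have hfge : ∀ t ∈ Set.Ico (0:ℝ) Tv, a ≤ f t := by
    by_contra hcon
    push_neg at hcon
    obtain ⟨t0, ht0, hft0⟩ := hcon
    set S := {t : ℝ | t ∈ Set.Ico (0:ℝ) Tv ∧ f t < a} with hS
    have hSne : S.Nonempty := ⟨t0, ht0, hft0⟩
    have hSbd : BddBelow S := ⟨0, fun x hx => hx.1.1⟩
    set s := sInf S with hsdef
    have hs0 : 0 ≤ s := le_csInf hSne fun x hx => hx.1.1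
    have hsT : s < Tv := lt_of_le_of_lt (csInf_le hSbd ⟨ht0, hft0⟩) ht0.2
    have hbefore : ∀ x, 0 ≤ x → x < s → a ≤ f x := by
      intro x hx1 hx2
      by_contra h
      push_neg at h
      exact absurd (csInf_le hSbd ⟨⟨hx1, lt_trans hx2 hsT⟩, h⟩) (not_le.2 hx2)
    have hsI : s ∈ Set.Ioo (-Tv) Tv := ⟨by linarith, hsT⟩
    have hfs : a ≤ f s := by
      rcases eq_or_lt_of_le hs0 with h|h
      · rw [← h, hf0]
      · refine ge_of_tendsto ((hfcont s hsI).continuousWithinAt :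
          Filter.Tendsto f (nhdsWithin s (Set.Iio s)) (nhds (f s))) ?_
        filter_upwards [Ioo_mem_nhdsLT_of_mem (⟨h, le_rfl⟩ : s ∈ Set.Ioc 0 s)] with x hx
        exact hbefore x hx.1.le hx.2
    have hfspos : 0 < f s := lt_of_lt_of_le ha hfs
    have hev : ∀ᶠ x in nhds s, 0 < f x :=
      (hfcont s hsI).eventually (eventually_gt_nhds hfspos)
    obtain ⟨δ, hδ, hball⟩ := Metric.eventually_nhds_iff.1 hev
    obtain ⟨b, hbS, hbs⟩ := (csInf_lt_iff hSbd hSne).1 (lt_add_of_pos_right s hδ)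
    have hsb : s ≤ b := csInf_le hSbd hbS
    have hposIcc : ∀ x ∈ Set.Icc (0:ℝ) b, 0 < f x := by
      intro x hx
      rcases lt_or_ge x s with hc|hc
      · exact lt_of_lt_of_le ha (hbefore x hx.1 hc)
      · apply hball
        rw [Real.dist_eq, abs_of_nonneg (by linarith)]
        linarith [hx.2]
    have hen := energy hn ha hf0 hd0 hode hbS.1.1 hbS.1.2 hposIcc
    have hfb : 0 < f b := hposIcc b (Set.right_mem_Icc.2 hbS.1.1)
    have h1 : Real.sinh a ^ (2*n-2) ≤ Real.sinh (f b) ^ (2*n-2) := by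
      nlinarith [sq_nonneg (deriv f b), pow_pos hsa (2*n-2)]
    have h2 : Real.sinh a ≤ Real.sinh (f b) :=
      le_of_pow_le_pow_left₀ (by omega) (Real.sinh_pos_iff.2 hfb).le h1
    exact absurd (Real.sinh_le_sinh.1 h2) (not_le.2 hbS.2)
  -- Step 2 : energy identity on [0, Tv)
  have henergy : ∀ t ∈ Set.Ico (0:ℝ) Tv,
      (1 + deriv f t ^ 2) * Real.sinh a ^ (2*n-2) = Real.sinh (f t) ^ (2*n-2) :=
    fun t ht => energy hn ha hf0 hd0 hode ht.1 ht.2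
      (fun s hs => lt_of_lt_of_le ha (hfge s ⟨hs.1, lt_of_le_of_lt hs.2 ht.2⟩))
  have hmemI : ∀ {t : ℝ}, t ∈ Set.Ico (0:ℝ) Tv → t ∈ Set.Ioo (-Tv) Tv :=
    fun {t} ht => ⟨by linarith [ht.1], ht.2⟩
  -- Step 3 : monotonicity
  have hdmono : StrictMonoOn (deriv f) (Set.Ico 0 Tv) := by
    apply strictMonoOn_of_deriv_pos (convex_Ico 0 Tv)
      (fun t ht => ((hode t (hmemI ht)).2).differentiableAt.continuousAt.continuousWithinAt)
    intro t ht
    rw [interior_Ico] at ht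
    have htIco : t ∈ Set.Ico (0:ℝ) Tv := ⟨ht.1.le, ht.2⟩
    rw [((hode t (hmemI htIco)).2).deriv]
    have hft : 0 < Real.sinh (f t) := Real.sinh_pos_iff.2 (lt_of_lt_of_le ha (hfge t htIco))
    have hn1 : (0:ℝ) < (n:ℝ) - 1 := by
      have : (2:ℝ) ≤ (n:ℝ) := by exact_mod_cast hn
      linarith
    exact mul_pos (mul_pos hn1 (by positivity)) (div_pos (Real.cosh_pos _) hft)
  have hdpos : ∀ t, 0 < t → t < Tv → 0 < deriv f t := by
    intro t h1 h2
    have := hdmono (Set.mem_Ico.2 ⟨le_rfl, hT⟩) (Set.mem_Ico.2 ⟨h1.le, h2⟩) h1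
    rwa [hd0] at this
  have hfmono : StrictMonoOn f (Set.Ico 0 Tv) := by
    apply strictMonoOn_of_deriv_pos (convex_Ico 0 Tv)
      (fun t ht => ((hode t (hmemI ht)).1).differentiableAt.continuousAt.continuousWithinAt)
    intro t ht
    rw [interior_Ico] at ht
    exact hdpos t ht.1 ht.2
  have hfgt : ∀ t, 0 < t → t < Tv → a < f t := by
    intro t h1 h2
    have := hfmono (Set.mem_Ico.2 ⟨le_rfl, hT⟩) (Set.mem_Ico.2 ⟨h1.le, h2⟩) h1
    rwa [hf0] at this
  -- Step 4 : key identity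
  have hc2 : (Real.sinh a ^ (n-1)) ^ 2 = Real.sinh a ^ (2*n-2) := by
    rw [← pow_mul]
    congr 1
    omega
  have hcpos : 0 < Real.sinh a ^ (n-1) := sinh_pow_pos ha
  have hkey : ∀ t, 0 < t → t < Tv →
      Real.sinh a ^ (n-1) * gg n a (f t) * deriv f t = 1 := by
    intro t h1 h2
    have hX : 0 < Real.sinh (f t) ^ (2*n-2) - Real.sinh a ^ (2*n-2) :=
      base_pos hn ha (hfgt t h1 h2)
    have hen := henergy t ⟨h1.le, h2⟩
    have hcd : (Real.sinh a ^ (n-1) * deriv f t) ^ 2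
        = Real.sinh (f t) ^ (2*n-2) - Real.sinh a ^ (2*n-2) := by
      rw [mul_pow, hc2]
      nlinarith [hen]
    have hcdpos : 0 < Real.sinh a ^ (n-1) * deriv f t := mul_pos hcpos (hdpos t h1 h2)
    have hsqrt : Real.sinh a ^ (n-1) * deriv f t
        = (Real.sinh (f t) ^ (2*n-2) - Real.sinh a ^ (2*n-2)) ^ ((1:ℝ)/2) := by
      rw [← hcd, ← Real.sqrt_eq_rpow, Real.sqrt_sq hcdpos.le]
    have hexp : Real.sinh a ^ (n-1) * gg n a (f t) * deriv f t
        = (Real.sinh (f t) ^ (2*n-2) - Real.sinh a ^ (2*n-2)) ^ ((1:ℝ)/2)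
          * (Real.sinh (f t) ^ (2*n-2) - Real.sinh a ^ (2*n-2)) ^ (-(1:ℝ)/2) := by
      rw [← hsqrt]
      simp only [gg]
      ring
    rw [hexp, ← Real.rpow_add hX]
    norm_num
  -- Step 5 : lam ∘ f = id
  have hlamcomp : ∀ t ∈ Set.Ico (0:ℝ) Tv, lam n a (f t) = t := by
    intro t ht
    rcases eq_or_lt_of_le ht.1 with h0|h0
    · rw [← h0, hf0, lam_self]
    · set h : ℝ → ℝ := fun s => lam n a (f s) - s with hhdef
      have hderiv : ∀ s, 0 < s → s < Tv → HasDerivAt h 0 s := by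
        intro s h1 h2
        have hfd := (hode s (hmemI ⟨h1.le, h2⟩)).1
        have hlamd := hasDerivAt_lam hn ha (hfgt s h1 h2)
        have hcomp : HasDerivAt (fun x => lam n a (f x))
            (Real.sinh a ^ (n-1) * gg n a (f s) * deriv f s) s := by
          have := hlamd.comp s hfd
          exact this
        rw [hkey s h1 h2] at hcomp
        have := hcomp.sub (hasDerivAt_id s)
        rw [sub_self] at this
        exact this
      have hconst : ∀ ε, 0 < ε → ε ≤ t → h t = h ε := by
        intro ε hε1 hε2
        exact constant_of_has_deriv_right_zero
          (fun s hs => ((hderiv s (lt_of_lt_of_le hε1 hs.1)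
            (lt_of_le_of_lt hs.2 ht.2)).differentiableAt.continuousAt.continuousWithinAt))
          (fun s hs => (hderiv s (lt_of_lt_of_le hε1 hs.1)
            (lt_trans hs.2 ht.2)).hasDerivWithinAt)
          t (Set.right_mem_Icc.2 hε2)
      have hcw : ContinuousWithinAt h (Set.Ico 0 Tv) 0 := by
        have hfc : ContinuousWithinAt f (Set.Ico 0 Tv) 0 :=
          (hfcont 0 (hmemI ⟨le_rfl, hT⟩)).continuousWithinAt
        have hmaps : Set.MapsTo f (Set.Ico 0 Tv) (Set.Ici a) := fun x hx => hfge x hx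
        have hlc : ContinuousWithinAt (lam n a) (Set.Ici a) (f 0) := by
          rw [hf0]
          exact lam_continuousWithinAt hn ha
        exact (hlc.comp hfc hmaps).sub continuousWithinAt_id
      have hne : (nhdsWithin (0:ℝ) (Set.Ioo (0:ℝ) t)).NeBot := left_nhdsWithin_Ioo_neBot h0
      have l1 : Filter.Tendsto h (nhdsWithin (0:ℝ) (Set.Ioo (0:ℝ) t)) (nhds (h 0)) :=
        hcw.tendsto.mono_left (nhdsWithin_mono 0
          (fun x hx => ⟨hx.1.le, lt_trans hx.2 ht.2⟩))
      have l2 : Filter.Tendsto h (nhdsWithin (0:ℝ) (Set.Ioo (0:ℝ) t)) (nhds (h t)) := by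
        have hev : (fun _ : ℝ => h t) =ᶠ[nhdsWithin (0:ℝ) (Set.Ioo (0:ℝ) t)] h := by
          filter_upwards [self_mem_nhdsWithin] with ε hε
          exact hconst ε hε.1 hε.2.le
        exact Filter.Tendsto.congr' hev tendsto_const_nhds
      have huniq : h t = h 0 := tendsto_nhds_unique l2 l1
      have h00 : h 0 = 0 := by
        rw [hhdef]
        simp [hf0, lam_self]
      have ht0 : h t = 0 := by rw [huniq, h00]
      have : lam n a (f t) - t = 0 := ht0
      linarith
  -- Step 6 : f ∘ lam = id
  have hsurj : ∀ ρ, a ≤ ρ → f (lam n a ρ) = ρ := by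
    intro ρ hρ
    have htmem : lam n a ρ ∈ Set.Ico (0:ℝ) Tv := ⟨lam_nonneg hn ha hρ, lam_lt_T hn ha hρ⟩
    have h1 : lam n a (f (lam n a ρ)) = lam n a ρ := hlamcomp _ htmem
    have h2 : f (lam n a ρ) ∈ Set.Ici a := hfge _ htmem
    exact (lam_strictMonoOn hn ha).injOn h2 hρ h1
  exact ⟨⟨fun t ht => hfge t ht, hfmono.injOn,
    fun ρ hρ => ⟨lam n a ρ, ⟨lam_nonneg hn ha hρ, lam_lt_T hn ha hρ⟩, hsurj ρ hρ⟩⟩,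
    hsurj, hlamcomp⟩
end

section
/- Let n ≥ 2 be an integer and a > 0, and let f(a,·) be the maximal solution of f'' = (n−1)(1+(f')²)·coth(f), f(0) = a, f'(0) = 0, defined on I_a = (−T(a), T(a)). Then the quantity sinh^{n−1}(f(a,t)) / √(1 + f_t(a,t)²) is constant along the solution; more precisely, sinh^{n−1}(f(a,t)) = sinh^{n−1}(a) · √(1 + f_t(a,t)²) for all t ∈ I_a. -/
/-- First integral of the catenary equation: along the maximal solution one has
`sinh^{n-1}(f(a,t)) = sinh^{n-1}(a) · √(1 + f_t(a,t)²)` for all `t ∈ I_a`,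
i.e. `sinh^{n-1}(f(a,t)) / √(1 + f_t(a,t)²)` is constant. -/
theorem catenary_first_integral (n : ℕ) (hn : 2 ≤ n) (a : ℝ) (ha : 0 < a) (f : ℝ → ℝ)
    (hf : IsCatenarySolOn n a (Set.Ioo (-(T n a)) (T n a)) f) :
    ∀ t ∈ Set.Ioo (-(T n a)) (T n a),
      Real.sinh (f t) ^ (n - 1) =
        Real.sinh a ^ (n - 1) * Real.sqrt (1 + deriv f t ^ 2) := by
  obtain ⟨m, rfl⟩ : ∃ m, n = m + 2 := ⟨n - 2, by omega⟩
  set I : Set ℝ := Set.Ioo (-(T (m + 2) a)) (T (m + 2) a) with hI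
  obtain ⟨h0I, hf0, hf'0, hode⟩ := hf
  have hIopen : IsOpen I := isOpen_Ioo
  -- continuity of f and deriv f on I
  have hfc : ContinuousOn f I := fun t ht =>
    ((hode t ht).1.continuousAt).continuousWithinAt
  have hf'c : ContinuousOn (deriv f) I := fun t ht =>
    ((hode t ht).2.continuousAt).continuousWithinAt
  set c : ℝ := Real.sinh a ^ (m + 1) with hc
  have hcpos : 0 < c := pow_pos (Real.sinh_pos_iff.2 ha) _
  set g : ℝ → ℝ := fun t => Real.sinh (f t) ^ (m + 1) / Real.sqrt (1 + deriv f t ^ 2)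
    with hg
  have hsqrtpos : ∀ t : ℝ, 0 < Real.sqrt (1 + deriv f t ^ 2) := fun t =>
    Real.sqrt_pos.2 (by positivity)
  have hgc : ContinuousOn g I := by
    apply ContinuousOn.div
    · exact (Real.continuous_sinh.comp_continuousOn hfc).pow _
    · exact Real.continuous_sqrt.comp_continuousOn (continuousOn_const.add (hf'c.pow 2))
    · exact fun t _ => (hsqrtpos t).ne'
  have hg0 : g 0 = c := by
    simp [hg, hf0, hf'0, hc]
  -- derivative of g is zero where sinh (f x) ≠ 0
  have hderiv : ∀ x ∈ I, Real.sinh (f x) ≠ 0 → HasDerivAt g 0 x := by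
    intro x hx hs0
    obtain ⟨h1, h2⟩ := hode x hx
    set p := deriv f x with hp
    set s := Real.sinh (f x) with hs
    set sq := Real.sqrt (1 + p ^ 2) with hsq
    have hsqpos : 0 < sq := hsqrtpos x
    have hsq2 : sq ^ 2 = 1 + p ^ 2 := Real.sq_sqrt (by positivity)
    have hN : HasDerivAt (fun t => Real.sinh (f t) ^ (m + 1))
        (((m : ℝ) + 1) * s ^ m * (Real.cosh (f x) * p)) x := by
      have := (h1.sinh).fun_pow (m + 1)
      simpa using this
    have hq : HasDerivAt (fun t => 1 + deriv f t ^ 2)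
        ((2 : ℝ) * p ^ 1 *
          (((m : ℝ) + 2 - 1) * (1 + p ^ 2) * (Real.cosh (f x) / s))) x := by
      have := (hasDerivAt_const x (1 : ℝ)).fun_add (h2.fun_pow 2)
      simpa [add_comm] using this
    have hDn : HasDerivAt (fun t => Real.sqrt (1 + deriv f t ^ 2))
        (((2 : ℝ) * p ^ 1 *
          (((m : ℝ) + 2 - 1) * (1 + p ^ 2) * (Real.cosh (f x) / s))) / (2 * sq)) x :=
      hq.sqrt (by positivity)
    have hdiv := hN.div hDn hsqpos.ne'
    have hz :
        (((m : ℝ) + 1) * s ^ m * (Real.cosh (f x) * p) * sq -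
            Real.sinh (f x) ^ (m + 1) *
              (((2 : ℝ) * p ^ 1 *
                (((m : ℝ) + 2 - 1) * (1 + p ^ 2) * (Real.cosh (f x) / s))) / (2 * sq))) /
          sq ^ 2 = 0 := by
      rw [div_eq_zero_iff]
      left
      rw [show (1 : ℝ) + p ^ 2 = sq ^ 2 from hsq2.symm, ← hs]
      field_simp
      ring
    rw [hz] at hdiv
    exact hdiv
  -- the open set where g is locally constant equal to c
  set u : Set ℝ := {t | ∃ ε > 0, Metric.ball t ε ⊆ I ∧ ∀ y ∈ Metric.ball t ε, g y = c}
    with hu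
  have huopen : IsOpen u := by
    rw [Metric.isOpen_iff]
    rintro t ⟨ε, hε, hball, hconst⟩
    refine ⟨ε, hε, fun y hy => ?_⟩
    have hsub : Metric.ball y (ε - dist y t) ⊆ Metric.ball t ε :=
      Metric.ball_subset_ball' (by rw [dist_comm]; linarith)
    refine ⟨ε - dist y t, by simpa [dist_comm] using hy, hsub.trans hball, fun z hz => ?_⟩
    exact hconst z (hsub hz)
  have husubI : u ⊆ I := by
    rintro t ⟨ε, hε, hball, -⟩
    exact hball (Metric.mem_ball_self hε)
  have hguc : ∀ t ∈ u, g t = c := by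
    rintro t ⟨ε, hε, -, hconst⟩
    exact hconst t (Metric.mem_ball_self hε)
  -- key local constancy
  have hkey : ∀ t₀ ∈ I, g t₀ = c → t₀ ∈ u := by
    intro t₀ ht₀ hgt₀
    have hs0 : Real.sinh (f t₀) ≠ 0 := by
      intro h
      rw [hg] at hgt₀
      simp only [h] at hgt₀
      rw [zero_pow (Nat.succ_ne_zero m), zero_div] at hgt₀
      exact hcpos.ne hgt₀
    have hVopen : IsOpen (I ∩ (fun y => Real.sinh (f y)) ⁻¹' {(0 : ℝ)}ᶜ) :=
      (Real.continuous_sinh.comp_continuousOn hfc).isOpen_inter_preimage hIopen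
        isOpen_compl_singleton
    obtain ⟨ε, hε, hball⟩ := Metric.isOpen_iff.1 hVopen t₀ ⟨ht₀, hs0⟩
    have hconst : ∀ y ∈ Metric.ball t₀ ε, g y = g t₀ := by
      intro y hy
      have hd : ∀ z ∈ Metric.ball t₀ ε, HasDerivWithinAt g ((fun _ => (0 : ℝ)) z)
          (Metric.ball t₀ ε) z := by
        intro z hz
        obtain ⟨hzI, hzs⟩ := hball hz
        exact (hderiv z hzI hzs).hasDerivWithinAt
      have h0 := Convex.norm_image_sub_le_of_norm_hasDerivWithin_le (C := 0) hd
        (fun z _ => by simp) (convex_ball t₀ ε) (Metric.mem_ball_self hε) hy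
      have h1 : ‖g y - g t₀‖ ≤ 0 := by simpa using h0
      have h2 : g y - g t₀ = 0 := by
        simpa using le_antisymm h1 (norm_nonneg _)
      linarith [h2]
    exact ⟨ε, hε, fun y hy => (hball hy).1, fun y hy => (hconst y hy).trans hgt₀⟩
  have h0u : (0 : ℝ) ∈ u := hkey 0 h0I hg0
  -- limit points of u inside I are in u
  have hclos : closure u ∩ I ⊆ u := by
    rintro x ⟨hxu, hxI⟩
    have hcont : ContinuousAt g x := hgc.continuousAt (hIopen.mem_nhds hxI)
    haveI : Filter.NeBot (nhdsWithin x u) := mem_closure_iff_nhdsWithin_neBot.1 hxu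
    have h1 : Filter.Tendsto g (nhdsWithin x u) (nhds (g x)) :=
      hcont.continuousWithinAt.tendsto
    have h2 : Filter.Tendsto g (nhdsWithin x u) (nhds c) := by
      apply Filter.Tendsto.congr' _ tendsto_const_nhds
      filter_upwards [self_mem_nhdsWithin] with y hy
      exact (hguc y hy).symm
    exact hkey x hxI (tendsto_nhds_unique h1 h2)
  have hIu : I ⊆ u :=
    isPreconnected_Ioo.subset_of_closure_inter_subset huopen ⟨0, h0I, h0u⟩ hclos
  intro t ht
  have hgt : g t = c := hguc t (hIu ht)
  have : Real.sinh (f t) ^ (m + 1) = c * Real.sqrt (1 + deriv f t ^ 2) := by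
    rw [hg] at hgt
    field_simp [(hsqrtpos t).ne'] at hgt
    linarith [hgt]
  simpa using this
end

section
/- Let n ≥ 2 be an integer. The function a ↦ h_R(a) := 2·T(a) = 2·sinh^{n−1}(a) · ∫_a^∞ (sinh^{2n−2}(u) − sinh^{2n−2}(a))^{−1/2} du is strictly increasing on (0, ∞). -/
open Real MeasureTheory Set

/-- Key cross inequality: `sinh a * sinh (b+s) < sinh b * sinh (a+s)` for `a < b`, `0 < s`. -/
private lemma sinh_cross_lt {a b s : ℝ} (hab : a < b) (hs : 0 < s) :
    Real.sinh a * Real.sinh (b + s) < Real.sinh b * Real.sinh (a + s) := by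
  have h1 : 0 < Real.sinh (b - a) := Real.sinh_pos_iff.2 (by linarith)
  rw [Real.sinh_sub] at h1
  have hss : 0 < Real.sinh s := Real.sinh_pos_iff.2 hs
  rw [Real.sinh_add, Real.sinh_add]
  nlinarith [mul_pos hss h1]

/-- `sinh u - sinh a ≥ u - a` for `0 ≤ a ≤ u`. -/
private lemma sinh_sub_ge {a u : ℝ} (ha : 0 ≤ a) (hu : a ≤ u) :
    u - a ≤ Real.sinh u - Real.sinh a := by
  have h1 : u - a ≤ Real.sinh (u - a) := Real.self_le_sinh_iff.2 (by linarith)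
  have h2 : Real.sinh u = Real.sinh ((u - a) + a) := by ring_nf
  rw [h2, Real.sinh_add]
  have h3 : (1 : ℝ) ≤ Real.cosh (u - a) := Real.one_le_cosh _
  have h4 : (1 : ℝ) ≤ Real.cosh a := Real.one_le_cosh _
  have h5 : (0 : ℝ) ≤ Real.sinh a := Real.sinh_nonneg_iff.2 ha
  nlinarith

/-- Pointwise strict comparison of the shifted integrands. -/
private lemma pointwise_lt {m : ℕ} (hm : 1 ≤ m) {a b s : ℝ} (ha : 0 < a) (hab : a < b)
    (hs : 0 < s) :
    Real.sinh a ^ m * (Real.sinh (s + a) ^ (2 * m) - Real.sinh a ^ (2 * m)) ^ (-(1 : ℝ) / 2)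
      < Real.sinh b ^ m *
          (Real.sinh (s + b) ^ (2 * m) - Real.sinh b ^ (2 * m)) ^ (-(1 : ℝ) / 2) := by
  set ca := Real.sinh a with hca_def
  set cb := Real.sinh b with hcb_def
  set A := Real.sinh (s + a) with hA_def
  set B := Real.sinh (s + b) with hB_def
  have hca : 0 < ca := Real.sinh_pos_iff.2 ha
  have hcb : 0 < cb := Real.sinh_pos_iff.2 (lt_trans ha hab)
  have hcaA : ca < A := Real.sinh_lt_sinh.2 (by linarith)
  have hcbB : cb < B := Real.sinh_lt_sinh.2 (by linarith)
  have h2m : (2 * m) ≠ 0 := by omega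
  have hSa : 0 < A ^ (2 * m) - ca ^ (2 * m) :=
    sub_pos.2 (pow_lt_pow_left₀ hcaA hca.le h2m)
  have hSb : 0 < B ^ (2 * m) - cb ^ (2 * m) :=
    sub_pos.2 (pow_lt_pow_left₀ hcbB hcb.le h2m)
  set Sa := A ^ (2 * m) - ca ^ (2 * m) with hSa_def
  set Sb := B ^ (2 * m) - cb ^ (2 * m) with hSb_def
  have key : ca * B < cb * A := by
    have := sinh_cross_lt hab hs
    rw [add_comm b s, add_comm a s] at this
    exact this
  have key2 : ca ^ (2 * m) * B ^ (2 * m) < cb ^ (2 * m) * A ^ (2 * m) := by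
    have hB : 0 < B := lt_trans hcb hcbB
    have h := pow_lt_pow_left₀ key (mul_pos hca hB).le h2m
    rwa [mul_pow, mul_pow] at h
  have hq : ca ^ (2 * m) * Sb < cb ^ (2 * m) * Sa := by
    rw [hSa_def, hSb_def]
    nlinarith [key2]
  have hsq : ∀ c S : ℝ, 0 < c → 0 < S →
      (c ^ m * S ^ (-(1 : ℝ) / 2)) ^ 2 = c ^ (2 * m) / S := by
    intro c S hc hS
    have h1 : (S ^ (-(1 : ℝ) / 2)) ^ (2 : ℕ) = S ^ ((-(1 : ℝ) / 2) * 2) := by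
      rw [← Real.rpow_natCast (S ^ (-(1 : ℝ) / 2)) 2, ← Real.rpow_mul hS.le]
      norm_num
    rw [mul_pow, h1]
    norm_num [Real.rpow_neg_one, ← pow_mul, mul_comm m 2, div_eq_mul_inv]
  have hX : 0 < ca ^ m * Sa ^ (-(1 : ℝ) / 2) :=
    mul_pos (pow_pos hca m) (Real.rpow_pos_of_pos hSa _)
  have hY : 0 < cb ^ m * Sb ^ (-(1 : ℝ) / 2) :=
    mul_pos (pow_pos hcb m) (Real.rpow_pos_of_pos hSb _)
  have h2 : (ca ^ m * Sa ^ (-(1 : ℝ) / 2)) ^ 2 < (cb ^ m * Sb ^ (-(1 : ℝ) / 2)) ^ 2 := by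
    rw [hsq ca Sa hca hSa, hsq cb Sb hcb hSb, div_lt_div_iff₀ hSa hSb]
    exact hq
  nlinarith [hX, hY, h2]

/-- Positivity of the integrand's base on `Ioi a`. -/
private lemma base_pos {m : ℕ} {a u : ℝ} (ha : 0 < a) (hu : a < u) (hm : 1 ≤ m) :
    0 < Real.sinh u ^ (2 * m) - Real.sinh a ^ (2 * m) :=
  sub_pos.2 (pow_lt_pow_left₀ (Real.sinh_lt_sinh.2 hu) (Real.sinh_nonneg_iff.2 ha.le) (by omega))

/-- Integrability of the catenoid integrand on `Ioi a`. -/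
private lemma integrable_g {m : ℕ} (hm : 1 ≤ m) {a : ℝ} (ha : 0 < a) :
    IntegrableOn
      (fun u => (Real.sinh u ^ (2 * m) - Real.sinh a ^ (2 * m)) ^ (-(1 : ℝ) / 2))
      (Set.Ioi a) := by
  set g : ℝ → ℝ :=
    fun u => (Real.sinh u ^ (2 * m) - Real.sinh a ^ (2 * m)) ^ (-(1 : ℝ) / 2) with hg_def
  have hcont : ContinuousOn g (Set.Ioi a) := by
    apply ContinuousOn.rpow_const
    · exact ((Real.continuous_sinh.pow _).sub continuous_const).continuousOn
    · intro x hx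
      exact Or.inl (ne_of_gt (base_pos ha hx hm))
  have hgpos : ∀ u ∈ Set.Ioi a, 0 < g u := fun u hu =>
    Real.rpow_pos_of_pos (base_pos ha hu hm) _
  -- lower bound for the base near `a`
  have hlow : ∀ u : ℝ, a < u →
      (u - a) * Real.sinh a ^ (2 * m - 1)
        ≤ Real.sinh u ^ (2 * m) - Real.sinh a ^ (2 * m) := by
    intro u hu
    set x := Real.sinh u
    set y := Real.sinh a
    have hy : 0 < y := Real.sinh_pos_iff.2 ha
    have hxy : y < x := Real.sinh_lt_sinh.2 hu
    have hd : u - a ≤ x - y := sinh_sub_ge ha.le hu.le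
    have hpow : y ^ (2 * m - 1) ≤ x ^ (2 * m - 1) := pow_le_pow_left₀ hy.le hxy.le _
    have hx2 : x ^ (2 * m) = x * x ^ (2 * m - 1) := by
      rw [← pow_succ']; congr 1; omega
    have hy2 : y ^ (2 * m) = y * y ^ (2 * m - 1) := by
      rw [← pow_succ']; congr 1; omega
    have hyp : 0 < y ^ (2 * m - 1) := pow_pos hy _
    calc (u - a) * y ^ (2 * m - 1) ≤ (x - y) * y ^ (2 * m - 1) :=
          mul_le_mul_of_nonneg_right hd hyp.le
      _ ≤ x ^ (2 * m) - y ^ (2 * m) := by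
          rw [hx2, hy2]
          nlinarith [mul_le_mul_of_nonneg_left hpow (le_of_lt (lt_trans hy hxy))]
  -- lower bound for the base far from `a`
  have hfar : ∀ u : ℝ, a + 1 < u →
      Real.exp u / 4 ≤ Real.sinh u ^ (2 * m) - Real.sinh a ^ (2 * m) := by
    intro u hu
    set x := Real.sinh u
    set y := Real.sinh a
    have hy : 0 < y := Real.sinh_pos_iff.2 ha
    have hxy : y < x := Real.sinh_lt_sinh.2 (by linarith)
    have hu1 : (1 : ℝ) ≤ u := by linarith
    have hx1 : (1 : ℝ) ≤ x := by
      have := Real.self_le_sinh_iff.2 (by linarith : (0:ℝ) ≤ u)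
      linarith
    have hd : (1 : ℝ) ≤ x - y := by
      have := sinh_sub_ge ha.le (by linarith : a ≤ u)
      linarith
    have hexp : Real.exp u / 4 ≤ x := by
      have h2 : (2 : ℝ) ≤ Real.exp u := by
        have := Real.add_one_le_exp u
        linarith
      have h3 : Real.exp (-u) ≤ 1 := Real.exp_le_one_iff.2 (by linarith)
      have hx_def : x = (Real.exp u - Real.exp (-u)) / 2 := Real.sinh_eq u
      rw [hx_def]
      linarith
    have hpow : y ^ (2 * m - 1) ≤ x ^ (2 * m - 1) := pow_le_pow_left₀ hy.le hxy.le _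
    have hx2 : x ^ (2 * m) = x * x ^ (2 * m - 1) := by
      rw [← pow_succ']; congr 1; omega
    have hy2 : y ^ (2 * m) = y * y ^ (2 * m - 1) := by
      rw [← pow_succ']; congr 1; omega
    have hxp1 : (1 : ℝ) ≤ x ^ (2 * m - 1) := by
      calc (1 : ℝ) = 1 ^ (2 * m - 1) := (one_pow _).symm
        _ ≤ x ^ (2 * m - 1) := pow_le_pow_left₀ (by norm_num) hx1 _
    have hxx : x ≤ x ^ (2 * m - 1) := by
      calc x = x ^ 1 := (pow_one x).symm
        _ ≤ x ^ (2 * m - 1) := pow_le_pow_right₀ hx1 (by omega)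
    -- x^{2m} - y^{2m} ≥ (x - y) x^{2m-1} ≥ x^{2m-1} ≥ x ≥ exp u / 4
    have hstep : (x - y) * x ^ (2 * m - 1) ≤ x ^ (2 * m) - y ^ (2 * m) := by
      rw [hx2, hy2]
      nlinarith [mul_le_mul_of_nonneg_left hpow hy.le]
    nlinarith [hstep, hxp1, hxx, hexp, mul_le_mul_of_nonneg_right hd
      (le_trans (by norm_num : (0:ℝ) ≤ 1) hxp1)]
  -- split the domain
  have hsplit : Set.Ioi a = Set.Ioc a (a + 1) ∪ Set.Ioi (a + 1) :=
    (Set.Ioc_union_Ioi_eq_Ioi (by linarith)).symm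
  rw [hsplit]
  apply MeasureTheory.IntegrableOn.union
  · -- near piece
    have hbase : IntervalIntegrable (fun x : ℝ => x ^ (-(1:ℝ)/2)) volume 0 1 :=
      intervalIntegral.intervalIntegrable_rpow' (by norm_num)
    have hshift : IntervalIntegrable (fun x : ℝ => (x - a) ^ (-(1:ℝ)/2)) volume
        (0 + a) (1 + a) := hbase.comp_sub_right a
    have hIoc : IntegrableOn (fun x : ℝ => (x - a) ^ (-(1:ℝ)/2)) (Set.Ioc a (a + 1)) := by
      have := (intervalIntegrable_iff_integrableOn_Ioc_of_le (by linarith)).1 hshift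
      simpa [zero_add, add_comm] using this
    have hdom : IntegrableOn
        (fun x : ℝ => (Real.sinh a ^ (2 * m - 1)) ^ (-(1:ℝ)/2) * (x - a) ^ (-(1:ℝ)/2))
        (Set.Ioc a (a + 1)) := hIoc.const_mul _
    apply hdom.mono' ((hcont.mono Set.Ioc_subset_Ioi_self).aestronglyMeasurable
      measurableSet_Ioc)
    rw [ae_restrict_iff' measurableSet_Ioc]
    refine ae_of_all _ fun u hu => ?_
    have hu1 : a < u := hu.1
    have hKpos : 0 < Real.sinh a ^ (2 * m - 1) := pow_pos (Real.sinh_pos_iff.2 ha) _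
    have hb : 0 < (u - a) * Real.sinh a ^ (2 * m - 1) :=
      mul_pos (by linarith) hKpos
    have h1 : g u ≤ ((u - a) * Real.sinh a ^ (2 * m - 1)) ^ (-(1:ℝ)/2) :=
      Real.rpow_le_rpow_of_nonpos hb (hlow u hu1) (by norm_num)
    have h2 : ((u - a) * Real.sinh a ^ (2 * m - 1)) ^ (-(1:ℝ)/2)
        = (u - a) ^ (-(1:ℝ)/2) * (Real.sinh a ^ (2 * m - 1)) ^ (-(1:ℝ)/2) :=
      Real.mul_rpow (by linarith) hKpos.le
    rw [Real.norm_of_nonneg (hgpos u hu1).le]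
    calc g u ≤ (u - a) ^ (-(1:ℝ)/2) * (Real.sinh a ^ (2 * m - 1)) ^ (-(1:ℝ)/2) :=
          h1.trans_eq h2
      _ = (Real.sinh a ^ (2 * m - 1)) ^ (-(1:ℝ)/2) * (u - a) ^ (-(1:ℝ)/2) := by ring
  · -- far piece
    have hψ : IntegrableOn (fun u : ℝ => 2 * Real.exp (-(1/2 : ℝ) * u)) (Set.Ioi (a + 1)) :=
      (exp_neg_integrableOn_Ioi (a + 1) (by norm_num : (0:ℝ) < 1/2)).const_mul 2
    apply hψ.mono' ((hcont.mono (Set.Ioi_subset_Ioi (by linarith))).aestronglyMeasurable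
      measurableSet_Ioi)
    rw [ae_restrict_iff' measurableSet_Ioi]
    refine ae_of_all _ fun u hu => ?_
    have hu1 : a + 1 < u := hu
    have hub : a < u := by linarith
    have hEpos : 0 < Real.exp u / 4 := by positivity
    have h1 : g u ≤ (Real.exp u / 4) ^ (-(1:ℝ)/2) :=
      Real.rpow_le_rpow_of_nonpos hEpos (hfar u hu1) (by norm_num)
    have h2 : (Real.exp u / 4) ^ (-(1:ℝ)/2) = 2 * Real.exp (-(1/2 : ℝ) * u) := by
      rw [Real.div_rpow (Real.exp_pos u).le (by norm_num)]
      rw [Real.rpow_def_of_pos (Real.exp_pos u), Real.log_exp]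
      have h4 : (4:ℝ) ^ (-(1:ℝ)/2) = 1/2 := by
        rw [show (-(1:ℝ)/2) = -(1/2 : ℝ) by norm_num, Real.rpow_neg (by norm_num),
          show (4:ℝ) = 2 ^ (2:ℕ) by norm_num, ← Real.rpow_natCast (2:ℝ) 2,
          ← Real.rpow_mul (by norm_num)]
        norm_num
      rw [h4, show u * (-(1:ℝ)/2) = -(1/2 : ℝ) * u by ring]
      ring
    rw [Real.norm_of_nonneg (hgpos u hub).le]
    exact h1.trans_eq h2

/-- The vertical height `h_R(a) = 2·T(a)` of the rotational minimal `n`-catenoid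
is a strictly increasing function of `a` on `(0, ∞)`. -/
theorem height_strictMono (n : ℕ) (hn : 2 ≤ n) :
    StrictMonoOn (fun a : ℝ => 2 * T n a) (Set.Ioi (0 : ℝ)) := by
  have hm : 1 ≤ n - 1 := by omega
  have h2m : 2 * n - 2 = 2 * (n - 1) := by omega
  intro a ha b hb hab
  simp only [Set.mem_Ioi] at ha hb
  -- the shifted integrand
  set P : ℝ → ℝ → ℝ := fun c s =>
    Real.sinh c ^ (n - 1) *
      (Real.sinh (s + c) ^ (2 * (n - 1)) - Real.sinh c ^ (2 * (n - 1))) ^ (-(1:ℝ)/2)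
    with hP_def
  have hemb : ∀ c : ℝ, MeasurableEmbedding (fun x : ℝ => x + c) := fun c =>
    (Homeomorph.addRight c).isClosedEmbedding.measurableEmbedding
  have hpre : ∀ c : ℝ, (fun x : ℝ => x + c) ⁻¹' (Set.Ioi c) = Set.Ioi (0:ℝ) := by
    intro c; ext x; simp
  have key : ∀ c : ℝ, 0 < c → T n c = ∫ s in Set.Ioi (0:ℝ), P c s := by
    intro c hc
    have h1 := MeasurePreserving.setIntegral_preimage_emb
      (measurePreserving_add_right volume c) (hemb c)
      (fun u => Real.sinh c ^ (n - 1) *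
        (Real.sinh u ^ (2 * (n - 1)) - Real.sinh c ^ (2 * (n - 1))) ^ (-(1:ℝ)/2))
      (Set.Ioi c)
    rw [hpre c] at h1
    rw [T, h2m, ← MeasureTheory.integral_const_mul, ← h1]
  have hint : ∀ c : ℝ, 0 < c → IntegrableOn (P c) (Set.Ioi (0:ℝ)) := by
    intro c hc
    have h0 : IntegrableOn
        (fun u => Real.sinh c ^ (n - 1) *
          (Real.sinh u ^ (2 * (n - 1)) - Real.sinh c ^ (2 * (n - 1))) ^ (-(1:ℝ)/2))
        (Set.Ioi c) := (integrable_g hm hc).const_mul _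
    have h1 := (MeasurePreserving.integrableOn_comp_preimage
      (measurePreserving_add_right volume c) (hemb c)
      (f := fun u => Real.sinh c ^ (n - 1) *
        (Real.sinh u ^ (2 * (n - 1)) - Real.sinh c ^ (2 * (n - 1))) ^ (-(1:ℝ)/2))
      (s := Set.Ioi c)).2 h0
    rw [hpre c] at h1
    exact h1
  have hPlt : ∀ s ∈ Set.Ioi (0:ℝ), P a s < P b s := fun s hs =>
    pointwise_lt hm ha hab hs
  have hdiff : 0 < ∫ s in Set.Ioi (0:ℝ), (P b s - P a s) := by
    have hsupp : Set.Ioi (0:ℝ) ⊆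
        (Function.support fun s => P b s - P a s) ∩ Set.Ioi (0:ℝ) :=
      fun s hs => ⟨ne_of_gt (sub_pos.2 (hPlt s hs)), hs⟩
    have hnn : 0 ≤ᵐ[volume.restrict (Set.Ioi (0:ℝ))] fun s => P b s - P a s := by
      filter_upwards [ae_restrict_mem measurableSet_Ioi] with s hs
      simpa using sub_nonneg.2 (hPlt s hs).le
    refine (setIntegral_pos_iff_support_of_nonneg_ae hnn
      ((hint b hb).sub (hint a ha))).2 ?_
    refine lt_of_lt_of_le ?_ (measure_mono hsupp)
    rw [Real.volume_Ioi]
    exact ENNReal.zero_lt_top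
  rw [MeasureTheory.integral_sub (hint b hb) (hint a ha)] at hdiff
  have hT : T n a < T n b := by
    rw [key a ha, key b hb]
    linarith
  simp only []
  linarith
end

section
/- Let n ≥ 2 be an integer. Then 2·T(a) = 2·sinh^{n−1}(a) · ∫_a^∞ (sinh^{2n−2}(u) − sinh^{2n−2}(a))^{−1/2} du tends to 0 as a → 0⁺. -/
open Real MeasureTheory Set Filter

/-- The comparison integrand. -/
noncomputable def base (t : ℝ) : ℝ := Real.sinh t ^ (-(1 : ℝ) / 2)

lemma base_meas : Measurable base := Real.measurable_sinh.pow_const _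

lemma base_integrable : IntegrableOn base (Set.Ioi 0) := by
  have h1 : IntegrableOn base (Set.Ioc 0 1) := by
    have hb : IntegrableOn (fun t : ℝ => t ^ (-(1:ℝ)/2)) (Set.Ioc 0 1) := by
      have := intervalIntegral.intervalIntegrable_rpow' (a := 0) (b := 1)
        (r := -(1:ℝ)/2) (by norm_num)
      simpa [intervalIntegrable_iff_integrableOn_Ioc_of_le (by norm_num : (0:ℝ) ≤ 1)] using this
    refine hb.mono' (base_meas.aestronglyMeasurable) ?_
    filter_upwards [ae_restrict_mem measurableSet_Ioc] with t ht
    have ht0 : 0 < t := ht.1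
    have hs : t ≤ Real.sinh t := Real.self_le_sinh_iff.2 ht0.le
    have hpos : (0:ℝ) < Real.sinh t := lt_of_lt_of_le ht0 hs
    simp only [base, Real.norm_eq_abs]
    rw [abs_of_nonneg (Real.rpow_nonneg hpos.le _)]
    exact Real.rpow_le_rpow_of_nonpos ht0 hs (by norm_num)
  have h2 : IntegrableOn base (Set.Ioi 1) := by
    have hb : IntegrableOn (fun t : ℝ => 2 * Real.exp (-(1/2) * t)) (Set.Ioi 1) :=
      (exp_neg_integrableOn_Ioi 1 (by norm_num : (0:ℝ) < 1/2)).const_mul _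
    refine hb.mono' (base_meas.aestronglyMeasurable) ?_
    filter_upwards [ae_restrict_mem measurableSet_Ioi] with t ht
    have ht1 : (1:ℝ) ≤ t := le_of_lt ht
    have hq : Real.exp t / 4 ≤ Real.sinh t := by
      rw [Real.sinh_eq]
      have h1 : Real.exp (-t) ≤ Real.exp t / 4 := by
        have h21 : (2:ℝ) ≤ Real.exp 1 := by nlinarith [Real.add_one_le_exp (1:ℝ)]
        have he2 : Real.exp 2 = Real.exp 1 * Real.exp 1 := by
          rw [← Real.exp_add]; norm_num
        have h42 : (4:ℝ) ≤ Real.exp 2 := by nlinarith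
        have key : Real.exp (-t) * 4 ≤ Real.exp t := by
          calc Real.exp (-t) * 4 ≤ Real.exp (-t) * Real.exp 2 := by
                nlinarith [Real.exp_pos (-t)]
            _ = Real.exp (2 - t) := by rw [← Real.exp_add]; ring_nf
            _ ≤ Real.exp t := Real.exp_le_exp.2 (by linarith)
        linarith
      linarith [Real.exp_pos t, Real.exp_pos (-t)]
    have hpos : (0:ℝ) < Real.exp t / 4 := by positivity
    have hle : Real.sinh t ^ (-(1:ℝ)/2) ≤ (Real.exp t / 4) ^ (-(1:ℝ)/2) :=
      Real.rpow_le_rpow_of_nonpos hpos hq (by norm_num)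
    have h4 : (4:ℝ) ^ (-(1:ℝ)/2) = 1/2 := by
      have hprod : ((4:ℝ) ^ (-(1:ℝ)/2)) * ((4:ℝ) ^ ((1:ℝ)/2)) = 1 := by
        rw [← Real.rpow_add (by norm_num : (0:ℝ) < 4)]; norm_num
      have h2' : (4:ℝ) ^ ((1:ℝ)/2) = 2 := by
        rw [← Real.sqrt_eq_rpow, show (4:ℝ) = 2^2 by norm_num, Real.sqrt_sq (by norm_num : (0:ℝ) ≤ 2)]
      rw [h2'] at hprod
      linarith
    have heq : (Real.exp t / 4) ^ (-(1:ℝ)/2) = 2 * Real.exp (-(1/2) * t) := by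
      rw [Real.div_rpow (Real.exp_pos t).le (by norm_num), h4,
        ← Real.exp_mul]
      rw [div_eq_mul_inv]
      norm_num
      ring_nf
    simp only [base, Real.norm_eq_abs]
    rw [abs_of_nonneg (Real.rpow_nonneg (Real.sinh_nonneg_iff.2 (by linarith)) _)]
    rw [← heq]; exact hle
  have hsplit : Set.Ioi (0:ℝ) = Set.Ioc 0 1 ∪ Set.Ioi 1 := by
    ext x
    simp only [Set.mem_Ioi, Set.mem_union, Set.mem_Ioc]
    constructor
    · intro h; rcases le_or_gt x 1 with h1 | h1
      · exact Or.inl ⟨h, h1⟩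
      · exact Or.inr h1
    · rintro (⟨h, _⟩ | h)
      · exact h
      · linarith
  rw [hsplit]
  exact h1.union h2

lemma indicator_shift (a : ℝ) :
    (Set.Ioi a).indicator (fun u => base (u - a)) =
      fun u => (Set.Ioi (0:ℝ)).indicator base (u - a) := by
  funext u
  by_cases h : u ∈ Set.Ioi a
  · rw [Set.indicator_of_mem h, Set.indicator_of_mem (by simpa [Set.mem_Ioi, sub_pos] using h)]
  · rw [Set.indicator_of_notMem h, Set.indicator_of_notMem (by
      simp only [Set.mem_Ioi] at h ⊢; intro hc; exact h (by linarith [sub_pos.mp hc]))]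

lemma shift_integrable (a : ℝ) : IntegrableOn (fun u => base (u - a)) (Set.Ioi a) := by
  apply (integrable_indicator_iff measurableSet_Ioi).mp
  rw [indicator_shift a]
  exact ((integrable_indicator_iff measurableSet_Ioi).2 base_integrable).comp_sub_right a

lemma shift_integral (a : ℝ) :
    ∫ u in Set.Ioi a, base (u - a) = ∫ t in Set.Ioi (0:ℝ), base t := by
  rw [← integral_indicator measurableSet_Ioi, indicator_shift a,
    integral_sub_right_eq_self ((Set.Ioi (0:ℝ)).indicator base) a,
    integral_indicator measurableSet_Ioi]

/-- key pointwise inequality -/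
lemma key_ineq {a u : ℝ} (ha : 0 < a) (hu : a < u) (k : ℕ) (hk : 1 ≤ k) :
    Real.sinh (u - a) * Real.sinh a ^ (k - 1) ≤
      Real.sinh u ^ k - Real.sinh a ^ k := by
  set b := Real.sinh a with hb
  set s := Real.sinh u with hs
  have hb0 : 0 < b := Real.sinh_pos_iff.2 ha
  have hbs : b < s := Real.sinh_lt_sinh.2 hu
  have h1 : Real.sinh (u - a) ≤ s - b := by
    have he : s = Real.sinh ((u - a) + a) := by rw [sub_add_cancel]
    rw [he, Real.sinh_add]
    have h2 : Real.sinh (u-a) * 1 ≤ Real.sinh (u-a) * Real.cosh a :=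
      mul_le_mul_of_nonneg_left (Real.one_le_cosh a)
        (Real.sinh_nonneg_iff.2 (by linarith))
    have h3 : b ≤ Real.cosh (u-a) * b :=
      le_mul_of_one_le_left hb0.le (Real.one_le_cosh _)
    rw [hb]
    nlinarith
  have h2 : Real.sinh (u - a) * b ^ (k - 1) ≤ (s - b) * b ^ (k-1) :=
    mul_le_mul_of_nonneg_right h1 (pow_nonneg hb0.le _)
  refine h2.trans ?_
  have hbk : b ^ (k-1) ≤ s ^ (k-1) := pow_le_pow_left₀ hb0.le hbs.le _
  have hkk : k - 1 + 1 = k := Nat.succ_pred_eq_of_pos hk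
  have hsb : s * b ^ (k-1) ≤ s * s ^ (k-1) :=
    mul_le_mul_of_nonneg_left hbk (by linarith)
  have e1 : s * s ^ (k-1) = s ^ k := by rw [← pow_succ', hkk]
  have e2 : b * b ^ (k-1) = b ^ k := by rw [← pow_succ', hkk]
  nlinarith

lemma T_le (n : ℕ) (hn : 2 ≤ n) {a : ℝ} (ha : 0 < a) :
    T n a ≤ Real.sinh a ^ ((1:ℝ)/2) * ∫ t in Set.Ioi (0:ℝ), base t := by
  set b := Real.sinh a with hbdef
  have hb0 : 0 < b := Real.sinh_pos_iff.2 ha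
  set k : ℕ := 2 * n - 2 with hkdef
  have hk1 : 1 ≤ k := by omega
  set C : ℝ := ∫ t in Set.Ioi (0:ℝ), base t with hC
  have hIle : (∫ u in Set.Ioi a,
      (Real.sinh u ^ k - b ^ k) ^ (-(1 : ℝ) / 2)) ≤
      (b ^ (k-1)) ^ (-(1:ℝ)/2) * C := by
    have hmono : (∫ u in Set.Ioi a,
        (Real.sinh u ^ k - b ^ k) ^ (-(1 : ℝ) / 2)) ≤
        ∫ u in Set.Ioi a, (b ^ (k-1)) ^ (-(1:ℝ)/2) * base (u - a) := by
      apply integral_mono_of_nonneg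
      · filter_upwards [ae_restrict_mem measurableSet_Ioi] with u hu
        have hus : b < Real.sinh u := Real.sinh_lt_sinh.2 hu
        have hnn : (0:ℝ) ≤ Real.sinh u ^ k - b ^ k := by
          have := pow_le_pow_left₀ hb0.le hus.le k
          linarith
        exact Real.rpow_nonneg hnn _
      · exact ((shift_integrable a).const_mul _)
      · filter_upwards [ae_restrict_mem measurableSet_Ioi] with u hu
        have hkey := key_ineq ha hu k hk1
        have hpos : (0:ℝ) < Real.sinh (u - a) * b ^ (k - 1) := by
          have h1 : 0 < Real.sinh (u - a) := Real.sinh_pos_iff.2 (by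
            simp only [Set.mem_Ioi] at hu; linarith)
          positivity
        have h2 : (Real.sinh u ^ k - b ^ k) ^ (-(1:ℝ)/2) ≤
            (Real.sinh (u - a) * b ^ (k-1)) ^ (-(1:ℝ)/2) :=
          Real.rpow_le_rpow_of_nonpos hpos hkey (by norm_num)
        refine h2.trans_eq ?_
        rw [Real.mul_rpow (Real.sinh_nonneg_iff.2 (by
          simp only [Set.mem_Ioi] at hu; linarith)) (pow_nonneg hb0.le _)]
        simp [base, mul_comm]
    calc _ ≤ _ := hmono
      _ = (b ^ (k-1)) ^ (-(1:ℝ)/2) * ∫ u in Set.Ioi a, base (u - a) := by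
          rw [integral_const_mul]
      _ = (b ^ (k-1)) ^ (-(1:ℝ)/2) * C := by rw [shift_integral]
  have hT : T n a = b ^ (n-1) * ∫ u in Set.Ioi a,
      (Real.sinh u ^ k - b ^ k) ^ (-(1 : ℝ) / 2) := rfl
  rw [hT]
  have hbn : (0:ℝ) ≤ b ^ (n-1) := pow_nonneg hb0.le _
  have step : b ^ (n-1) * (∫ u in Set.Ioi a,
      (Real.sinh u ^ k - b ^ k) ^ (-(1 : ℝ) / 2)) ≤
      b ^ (n-1) * ((b ^ (k-1)) ^ (-(1:ℝ)/2) * C) :=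
    mul_le_mul_of_nonneg_left hIle hbn
  refine step.trans_eq ?_
  have e1 : (b ^ (k-1) : ℝ) ^ (-(1:ℝ)/2) = b ^ (((k:ℝ)-1) * (-(1:ℝ)/2)) := by
    rw [← Real.rpow_natCast b (k-1), ← Real.rpow_mul hb0.le]
    congr 1
    push_cast [Nat.cast_sub hk1]
    ring
  have e2 : (b ^ (n-1) : ℝ) = b ^ ((n:ℝ)-1) := by
    rw [← Real.rpow_natCast b (n-1)]
    congr 1
    push_cast [Nat.cast_sub (by omega : 1 ≤ n)]
    ring
  rw [e1, e2, ← mul_assoc, ← Real.rpow_add hb0]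
  congr 2
  have hkr : (k:ℝ) = 2 * n - 2 := by
    rw [hkdef]
    push_cast [Nat.cast_sub (by omega : 2 ≤ 2*n)]
    ring
  rw [hkr]; ring

lemma T_nonneg (n : ℕ) {a : ℝ} (ha : 0 < a) : 0 ≤ T n a := by
  have hb0 : 0 < Real.sinh a := Real.sinh_pos_iff.2 ha
  apply mul_nonneg (pow_nonneg hb0.le _)
  apply setIntegral_nonneg measurableSet_Ioi
  intro u hu
  have hus : Real.sinh a < Real.sinh u := Real.sinh_lt_sinh.2 hu
  have hnn : (0:ℝ) ≤ Real.sinh u ^ (2*n-2) - Real.sinh a ^ (2*n-2) := by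
    have := pow_le_pow_left₀ hb0.le hus.le (2*n-2)
    linarith
  exact Real.rpow_nonneg hnn _

/-- The height `2·T(a)` of the rotational minimal `n`-catenoid tends to `0`
as `a → 0⁺`. -/
theorem height_tendsto_zero (n : ℕ) (hn : 2 ≤ n) :
    Filter.Tendsto (fun a : ℝ => 2 * T n a) (nhdsWithin 0 (Set.Ioi 0)) (nhds 0) := by
  set C : ℝ := ∫ t in Set.Ioi (0:ℝ), base t with hC
  apply squeeze_zero' (g := fun a => 2 * (Real.sqrt (Real.sinh a) * C))
  · filter_upwards [self_mem_nhdsWithin] with a ha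
    exact mul_nonneg (by norm_num) (T_nonneg n ha)
  · filter_upwards [self_mem_nhdsWithin] with a ha
    have h := T_le n hn ha
    have hs : Real.sinh a ^ ((1:ℝ)/2) = Real.sqrt (Real.sinh a) := by
      rw [Real.sqrt_eq_rpow]
    rw [hs] at h
    linarith
  · have hc : Continuous fun a : ℝ => 2 * (Real.sqrt (Real.sinh a) * C) := by
      continuity
    have ht := hc.tendsto 0
    simp only [Real.sinh_zero, Real.sqrt_zero, zero_mul, mul_zero] at ht
    exact ht.mono_left nhdsWithin_le_nhds
end

section
/- Let n ≥ 2 be an integer. Then 2·T(a) = 2·sinh^{n−1}(a) · ∫_a^∞ (sinh^{2n−2}(u) − sinh^{2n−2}(a))^{−1/2} du tends to π/(n−1) as a → +∞. -/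
open Real MeasureTheory Set Filter

lemma tanh_aux_tendsto : Tendsto (fun a : ℝ => Real.sinh a / Real.cosh a) atTop (nhds 1) := by
  have h0 : Tendsto (fun a : ℝ => Real.exp (-(2 * a))) atTop (nhds 0) := by
    apply Real.tendsto_exp_atBot.comp
    apply tendsto_neg_atBot_iff.mpr
    exact tendsto_id.const_mul_atTop (by norm_num : (0:ℝ) < 2)
  have h1 : Tendsto (fun a : ℝ => (1 - Real.exp (-(2 * a))) / (1 + Real.exp (-(2 * a)))) atTop
      (nhds 1) := by
    have := Tendsto.div ((tendsto_const_nhds (x := (1:ℝ))).sub h0)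
      ((tendsto_const_nhds (x := (1:ℝ))).add h0) (show (1:ℝ) + 0 ≠ 0 by norm_num)
    convert this using 2 <;> norm_num
  refine h1.congr (fun a => ?_)
  have he : Real.exp a ≠ 0 := (Real.exp_pos a).ne'
  rw [Real.sinh_eq, Real.cosh_eq]
  rw [show (-(2*a)) = -a + -a by ring, Real.exp_add, Real.exp_neg]
  field_simp

lemma key_bounds (m : ℕ) (hm : 1 ≤ m) (a : ℝ) (ha : 0 < a) :
    Real.sinh a / Real.cosh a * (π / (2 * m)) ≤
      Real.sinh a ^ m * ∫ u in Set.Ioi a,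
        (Real.sinh u ^ (2 * m) - Real.sinh a ^ (2 * m)) ^ (-(1 : ℝ) / 2) ∧
    Real.sinh a ^ m * (∫ u in Set.Ioi a,
        (Real.sinh u ^ (2 * m) - Real.sinh a ^ (2 * m)) ^ (-(1 : ℝ) / 2)) ≤ π / (2 * m) := by
  have hsa : 0 < Real.sinh a := Real.sinh_pos_iff.mpr ha
  set s : ℝ := Real.sinh a ^ m with hs_def
  have hs : 0 < s := pow_pos hsa m
  set g' : ℝ → ℝ := fun u =>
    s * Real.cosh u / (Real.sinh u * Real.sqrt ((Real.sinh u ^ m) ^ 2 - s ^ 2)) with hg'_def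
  set F : ℝ → ℝ := fun u => -(1 / (m : ℝ)) * Real.arcsin (s / Real.sinh u ^ m) with hF_def
  have hmR : (0 : ℝ) < (m : ℝ) := by exact_mod_cast hm
  -- facts for u > a
  have hfacts : ∀ u ∈ Ioi a, 0 < Real.sinh u ∧ s < Real.sinh u ^ m := by
    intro u hu
    have h1 : Real.sinh a < Real.sinh u := Real.sinh_lt_sinh.mpr hu
    exact ⟨hsa.trans h1, pow_lt_pow_left₀ h1 hsa.le (by omega)⟩
  -- derivative
  have hderiv : ∀ u ∈ Ioi a, HasDerivAt F (g' u) u := by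
    intro u hu
    obtain ⟨hsu, hlt⟩ := hfacts u hu
    have hsm : 0 < Real.sinh u ^ m := pow_pos hsu m
    have hy0 : 0 < s / Real.sinh u ^ m := div_pos hs hsm
    have hy1 : s / Real.sinh u ^ m < 1 := (div_lt_one hsm).mpr hlt
    have hpow : HasDerivAt (fun u => Real.sinh u ^ m)
        ((m : ℝ) * Real.sinh u ^ (m - 1) * Real.cosh u) u :=
      (Real.hasDerivAt_sinh u).pow m
    have hdiv : HasDerivAt (fun u => s / Real.sinh u ^ m)
        ((0 * Real.sinh u ^ m - s * ((m : ℝ) * Real.sinh u ^ (m - 1) * Real.cosh u)) /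
          (Real.sinh u ^ m) ^ 2) u :=
      (hasDerivAt_const u s).div hpow hsm.ne'
    have harc : HasDerivAt (fun u => Real.arcsin (s / Real.sinh u ^ m))
        ((1 / Real.sqrt (1 - (s / Real.sinh u ^ m) ^ 2)) *
          ((0 * Real.sinh u ^ m - s * ((m : ℝ) * Real.sinh u ^ (m - 1) * Real.cosh u)) /
            (Real.sinh u ^ m) ^ 2)) u :=
      by
        have h0 := Real.hasDerivAt_arcsin (x := s / Real.sinh u ^ m) (ne_of_gt (by linarith)) hy1.ne
        exact h0.comp u hdiv
    have := harc.const_mul (-(1 / (m : ℝ)))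
    refine this.congr_deriv (Eq.symm ?_)
    -- algebra
    have hxpos : 0 < (Real.sinh u ^ m) ^ 2 - s ^ 2 := by
      have := pow_lt_pow_left₀ hlt hs.le (two_ne_zero)
      linarith
    have hsqrt : Real.sqrt (1 - (s / Real.sinh u ^ m) ^ 2) =
        Real.sqrt ((Real.sinh u ^ m) ^ 2 - s ^ 2) / Real.sinh u ^ m := by
      have h1y : (1:ℝ) - (s / Real.sinh u ^ m) ^ 2 =
          ((Real.sinh u ^ m) ^ 2 - s ^ 2) / (Real.sinh u ^ m) ^ 2 := by
        field_simp
      rw [h1y, Real.sqrt_div hxpos.le, Real.sqrt_sq hsm.le]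
    have hsq : 0 < Real.sqrt ((Real.sinh u ^ m) ^ 2 - s ^ 2) := Real.sqrt_pos.mpr hxpos
    have hpowm : Real.sinh u ^ (m - 1) * Real.sinh u = Real.sinh u ^ m := by
      conv_rhs => rw [show m = (m - 1) + 1 by omega]
      rw [pow_succ]
    rw [hg'_def, hsqrt]
    field_simp
    rw [← hpowm]
    ring
  -- nonnegativity
  have hnonneg : ∀ u ∈ Ioi a, 0 ≤ g' u := by
    intro u hu
    obtain ⟨hsu, _⟩ := hfacts u hu
    exact div_nonneg (mul_nonneg hs.le (Real.cosh_pos u).le)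
      (mul_nonneg hsu.le (Real.sqrt_nonneg _))
  -- continuity at a
  have hcont : ContinuousWithinAt F (Ici a) a := by
    apply ContinuousAt.continuousWithinAt
    have h1 : ContinuousAt (fun u => s / Real.sinh u ^ m) a :=
      continuousAt_const.div ((Real.continuous_sinh.continuousAt).pow m)
        (pow_ne_zero m hsa.ne')
    exact continuousAt_const.mul (Real.continuous_arcsin.continuousAt.comp h1)
  -- limit at infinity
  have htend : Tendsto F atTop (nhds 0) := by
    have hsinh : Tendsto Real.sinh atTop atTop := by
      apply tendsto_atTop_mono' atTop _ tendsto_id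
      filter_upwards [eventually_gt_atTop 0] with x hx
      exact (Real.self_lt_sinh_iff.mpr hx).le
    have h1 : Tendsto (fun u : ℝ => Real.sinh u ^ m) atTop atTop :=
      (tendsto_pow_atTop (by omega)).comp hsinh
    have h2 : Tendsto (fun u : ℝ => s / Real.sinh u ^ m) atTop (nhds 0) :=
      tendsto_const_nhds.div_atTop h1
    have h3 : Tendsto (fun u : ℝ => Real.arcsin (s / Real.sinh u ^ m)) atTop (nhds 0) := by
      have := (Real.continuous_arcsin.continuousAt (x := 0)).tendsto.comp h2
      rw [Real.arcsin_zero] at this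
      exact this
    have h4 := h3.const_mul (-(1 / (m : ℝ)))
    rw [mul_zero] at h4
    exact h4
  have hFa : F a = -(π / (2 * m)) := by
    rw [hF_def]
    show -(1 / (m:ℝ)) * Real.arcsin (s / Real.sinh a ^ m) = _
    rw [← hs_def, div_self hs.ne', Real.arcsin_one]
    ring
  have hint : ∫ u in Ioi a, g' u = π / (2 * m) := by
    rw [integral_Ioi_of_hasDerivAt_of_nonneg hcont hderiv hnonneg htend, hFa]
    ring
  have hintble : IntegrableOn g' (Ioi a) :=
    integrableOn_Ioi_deriv_of_nonneg hcont hderiv hnonneg htend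
  -- pointwise identity
  have hpt : ∀ u ∈ Ioi a,
      s * (Real.sinh u ^ (2 * m) - Real.sinh a ^ (2 * m)) ^ (-(1 : ℝ) / 2) =
        Real.sinh u / Real.cosh u * g' u := by
    intro u hu
    obtain ⟨hsu, hlt⟩ := hfacts u hu
    have hxpos : 0 < (Real.sinh u ^ m) ^ 2 - s ^ 2 := by
      have := pow_lt_pow_left₀ hlt hs.le (two_ne_zero)
      linarith
    have h2m : ∀ x : ℝ, x ^ (2 * m) = (x ^ m) ^ 2 := fun x => by
      rw [← pow_mul, Nat.mul_comm]
    rw [h2m, h2m, ← hs_def]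
    rw [show (-(1:ℝ)/2) = -(1/2) by ring, Real.rpow_neg hxpos.le, ← Real.sqrt_eq_rpow]
    have hsq : 0 < Real.sqrt ((Real.sinh u ^ m) ^ 2 - s ^ 2) := Real.sqrt_pos.mpr hxpos
    rw [hg'_def]
    field_simp
  -- rewrite the target integral
  have hTeq : (Real.sinh a ^ m) * (∫ u in Set.Ioi a,
      (Real.sinh u ^ (2 * m) - Real.sinh a ^ (2 * m)) ^ (-(1 : ℝ) / 2)) =
      ∫ u in Ioi a, Real.sinh u / Real.cosh u * g' u := by
    rw [← integral_const_mul]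
    exact setIntegral_congr_fun measurableSet_Ioi (fun u hu => hpt u hu)
  have hmeas : AEStronglyMeasurable (fun u => Real.sinh u / Real.cosh u * g' u)
      (volume.restrict (Ioi a)) := by
    apply Measurable.aestronglyMeasurable
    apply Measurable.mul
    · exact Real.continuous_sinh.measurable.div Real.continuous_cosh.measurable
    · apply Measurable.div
      · exact (measurable_const.mul Real.continuous_cosh.measurable)
      · exact Real.continuous_sinh.measurable.mul
          (Real.continuous_sqrt.measurable.comp ((Real.continuous_sinh.measurable.pow_const m).pow_const 2
            |>.sub measurable_const))
  have htanh_lt_one : ∀ u : ℝ, Real.sinh u / Real.cosh u < 1 := fun u =>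
    (div_lt_one (Real.cosh_pos u)).mpr (Real.sinh_lt_cosh u)
  have htanh_nonneg : ∀ u ∈ Ioi a, 0 ≤ Real.sinh u / Real.cosh u := fun u hu =>
    div_nonneg (hfacts u hu).1.le (Real.cosh_pos u).le
  have hintble2 : IntegrableOn (fun u => Real.sinh u / Real.cosh u * g' u) (Ioi a) := by
    apply hintble.mono' hmeas
    filter_upwards [ae_restrict_mem measurableSet_Ioi] with u hu
    rw [Real.norm_eq_abs, abs_mul, abs_of_nonneg (hnonneg u hu),
      abs_of_nonneg (htanh_nonneg u hu)]
    exact mul_le_of_le_one_left (hnonneg u hu) (htanh_lt_one u).le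
  constructor
  · -- lower bound
    rw [hTeq]
    calc Real.sinh a / Real.cosh a * (π / (2 * m))
        = ∫ u in Ioi a, Real.sinh a / Real.cosh a * g' u := by
          rw [integral_const_mul, hint]
      _ ≤ ∫ u in Ioi a, Real.sinh u / Real.cosh u * g' u := by
          apply setIntegral_mono_on (hintble.const_mul _) hintble2 measurableSet_Ioi
          intro u hu
          apply mul_le_mul_of_nonneg_right _ (hnonneg u hu)
          -- sinh a / cosh a ≤ sinh u / cosh u
          rw [div_le_div_iff₀ (Real.cosh_pos a) (Real.cosh_pos u)]
          have h1 : Real.sinh (a - u) < 0 := Real.sinh_neg_iff.mpr (by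
            have : a < u := hu
            linarith)
          rw [Real.sinh_sub] at h1
          linarith
  · -- upper bound
    rw [hTeq, ← hint]
    apply setIntegral_mono_on hintble2 hintble measurableSet_Ioi
    intro u hu
    exact mul_le_of_le_one_left (hnonneg u hu) (htanh_lt_one u).le

/-- The height `2·T(a)` of the rotational minimal `n`-catenoid tends to
`π/(n−1)` as `a → +∞`. -/
theorem height_tendsto_pi_div (n : ℕ) (hn : 2 ≤ n) :
    Filter.Tendsto (fun a : ℝ => 2 * T n a) Filter.atTop
      (nhds (Real.pi / ((n : ℝ) - 1))) := by
  set m : ℕ := n - 1 with hm_def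
  have hm : 1 ≤ m := by omega
  have hcast : ((n : ℝ) - 1) = (m : ℝ) := by
    rw [hm_def]
    push_cast [Nat.cast_sub (by omega : 1 ≤ n)]
    ring
  have hmR : (0 : ℝ) < (m : ℝ) := by exact_mod_cast hm
  rw [hcast]
  have hTdef : ∀ a : ℝ, T n a = Real.sinh a ^ m * ∫ u in Set.Ioi a,
      (Real.sinh u ^ (2 * m) - Real.sinh a ^ (2 * m)) ^ (-(1 : ℝ) / 2) := by
    intro a
    rw [T, show n - 1 = m from rfl, show 2 * n - 2 = 2 * m by omega]
  have hlow : Tendsto (fun a : ℝ => Real.sinh a / Real.cosh a * (π / (m : ℝ))) atTop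
      (nhds (π / (m : ℝ))) := by
    have := tanh_aux_tendsto.mul_const (π / (m : ℝ))
    simpa using this
  apply tendsto_of_tendsto_of_tendsto_of_le_of_le' hlow tendsto_const_nhds
  · filter_upwards [eventually_gt_atTop 0] with a ha
    have h := (key_bounds m hm a ha).1
    rw [hTdef a]
    have : 2 * (Real.sinh a / Real.cosh a * (π / (2 * m))) =
        Real.sinh a / Real.cosh a * (π / (m : ℝ)) := by
      field_simp
    linarith [h]
  · filter_upwards [eventually_gt_atTop 0] with a ha
    have h := (key_bounds m hm a ha).2
    rw [hTdef a]
    have : 2 * (π / (2 * (m : ℝ))) = π / (m : ℝ) := by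
      field_simp
    linarith [h]
end

section
/- The function H(d) = ∫_{arccosh(d)}^∞ d/√(cosh²(u) − d²) du, defined for d > 1, tends to +∞ as d → 1⁺. -/
open Real Set MeasureTheory Filter

/-- `arccosh`, the inverse of `cosh` on `[1, ∞)`. -/
noncomputable def arccosh (d : ℝ) : ℝ :=
  Real.log (d + Real.sqrt (d ^ 2 - 1))

/-- `H d = ∫_{arccosh d}^∞ d / √(cosh²(u) − d²) du`, for `d > 1`. -/
noncomputable def H (d : ℝ) : ℝ :=
  ∫ u in Set.Ioi (arccosh d), d / Real.sqrt (Real.cosh u ^ 2 - d ^ 2)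

lemma cosh_arccosh {d : ℝ} (hd : 1 < d) : Real.cosh (arccosh d) = d := by
  have hs0 : 0 ≤ Real.sqrt (d ^ 2 - 1) := Real.sqrt_nonneg _
  have hpos : 0 < d + Real.sqrt (d ^ 2 - 1) := by linarith
  have hs : Real.sqrt (d ^ 2 - 1) ^ 2 = d ^ 2 - 1 := Real.sq_sqrt (by nlinarith)
  have hinv : (d + Real.sqrt (d ^ 2 - 1))⁻¹ = d - Real.sqrt (d ^ 2 - 1) :=
    inv_eq_of_mul_eq_one_right (by nlinarith)
  rw [arccosh, Real.cosh_log hpos, hinv]; ring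

lemma arccosh_pos {d : ℝ} (hd : 1 < d) : 0 < arccosh d :=
  Real.log_pos (by have := Real.sqrt_nonneg (d ^ 2 - 1); linarith)

lemma arccosh_lt_one {d : ℝ} (hd : 1 < d) (hd2 : d < 5/4) : arccosh d < 1 := by
  have hs : Real.sqrt (d ^ 2 - 1) < 3/4 := by
    rw [Real.sqrt_lt' (by norm_num)]; nlinarith
  have hs0 : 0 ≤ Real.sqrt (d ^ 2 - 1) := Real.sqrt_nonneg _
  rw [arccosh, Real.log_lt_iff_lt_exp (by linarith)]
  have := Real.exp_one_gt_d9
  linarith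

lemma sinh_le_mul_cosh {u : ℝ} (hu : 0 ≤ u) : Real.sinh u ≤ u * Real.cosh u := by
  have hg : ∀ x : ℝ, HasDerivAt (fun x => x * Real.cosh x - Real.sinh x)
      (x * Real.sinh x) x := by
    intro x
    have h : HasDerivAt (fun x => x * Real.cosh x - Real.sinh x)
        (1 * Real.cosh x + x * Real.sinh x - Real.cosh x) x :=
      ((hasDerivAt_id x).mul (Real.hasDerivAt_cosh x)).sub (Real.hasDerivAt_sinh x)
    convert h using 1
    ring
  have hmono : Monotone (fun x => x * Real.cosh x - Real.sinh x) := by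
    apply monotone_of_deriv_nonneg (fun x => (hg x).differentiableAt)
    intro x
    rw [(hg x).deriv]
    rcases le_or_gt 0 x with h | h
    · exact mul_nonneg h (by rwa [Real.sinh_nonneg_iff])
    · have hs : Real.sinh x ≤ 0 := Real.sinh_nonpos_iff.2 h.le
      nlinarith
  have h0 := hmono hu
  simp only [Real.sinh_zero, Real.cosh_zero, mul_one, zero_mul, sub_zero, zero_sub, neg_zero]
    at h0
  linarith [h0]

lemma X_pos {d u : ℝ} (hd : 1 < d) (hu : arccosh d < u) : 0 < Real.cosh u ^ 2 - d ^ 2 := by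
  have ha := arccosh_pos hd
  have h : Real.cosh (arccosh d) < Real.cosh u := by
    rw [Real.cosh_lt_cosh, abs_of_pos ha, abs_of_pos (lt_trans ha hu)]; exact hu
  rw [cosh_arccosh hd] at h
  nlinarith

lemma X_lower {d u : ℝ} (hd : 1 < d) (hu : arccosh d < u) :
    Real.sinh (arccosh d) / 2 * (u - arccosh d) ≤ Real.cosh u ^ 2 - d ^ 2 := by
  set a := arccosh d with ha_def
  have ha : 0 < a := arccosh_pos hd
  have e1 : u - a + 1 ≤ Real.exp (u - a) := Real.add_one_le_exp _
  have e2 : Real.exp a * Real.exp (u - a) = Real.exp u := by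
    rw [← Real.exp_add]; ring_nf
  have e3 : 1 ≤ Real.exp a := Real.one_le_exp ha.le
  have e4 : Real.exp (-u) ≤ Real.exp (-a) := Real.exp_le_exp.2 (by linarith)
  have hstep : (u - a) / 2 ≤ Real.sinh u - Real.sinh a := by
    rw [Real.sinh_eq, Real.sinh_eq]; nlinarith [Real.exp_pos a]
  have hsa : 0 < Real.sinh a := Real.sinh_pos_iff.2 ha
  have hmono : Real.sinh a ≤ Real.sinh u := Real.sinh_le_sinh.2 hu.le
  have hcu : Real.cosh u ^ 2 = Real.sinh u ^ 2 + 1 := Real.cosh_sq u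
  have hca : d ^ 2 = Real.sinh a ^ 2 + 1 := by
    rw [← cosh_arccosh hd]; exact Real.cosh_sq a
  have key : (u - a) / 2 * Real.sinh a ≤
      (Real.sinh u - Real.sinh a) * (Real.sinh u + Real.sinh a) :=
    mul_le_mul hstep (by linarith) hsa.le (by linarith)
  nlinarith [key]

lemma X_upper {d u : ℝ} (hd : 1 < d) (hu1 : 0 < u) (hu2 : u ≤ 1) :
    Real.cosh u ^ 2 - d ^ 2 ≤ (Real.cosh 1 * u) ^ 2 := by
  have h1 : Real.sinh u ≤ u * Real.cosh u := sinh_le_mul_cosh hu1.le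
  have h2 : Real.cosh u ≤ Real.cosh 1 := by
    rw [Real.cosh_le_cosh, abs_of_pos hu1, abs_one]; exact hu2
  have h3 : 0 ≤ Real.sinh u := Real.sinh_nonneg_iff.2 hu1.le
  have hcu : Real.cosh u ^ 2 = Real.sinh u ^ 2 + 1 := Real.cosh_sq u
  have hc0 : 0 < Real.cosh u := Real.cosh_pos u
  have h4 : Real.sinh u ^ 2 ≤ (u * Real.cosh u) ^ 2 := by nlinarith
  have h5 : (u * Real.cosh u) ^ 2 ≤ (Real.cosh 1 * u) ^ 2 := by
    nlinarith [mul_le_mul h2 h2 hc0.le (Real.cosh_pos 1).le, sq_nonneg u,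
      mul_nonneg (sub_nonneg.2 (mul_le_mul h2 h2 hc0.le (Real.cosh_pos 1).le)) (sq_nonneg u)]
  nlinarith

lemma f_contOn {d : ℝ} (hd : 1 < d) :
    ContinuousOn (fun u => d / Real.sqrt (Real.cosh u ^ 2 - d ^ 2)) (Ioi (arccosh d)) := by
  apply ContinuousOn.div continuousOn_const
  · exact (Real.continuous_sqrt.comp (by continuity)).continuousOn
  · intro u hu
    exact ne_of_gt (Real.sqrt_pos.2 (X_pos hd hu))

lemma f_integrable {d : ℝ} (hd : 1 < d) :
    IntegrableOn (fun u => d / Real.sqrt (Real.cosh u ^ 2 - d ^ 2)) (Ioi (arccosh d)) := by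
  set a := arccosh d with ha_def
  have ha : 0 < a := arccosh_pos hd
  have hsa : 0 < Real.sinh a := Real.sinh_pos_iff.2 ha
  have hd0 : (0:ℝ) < d := lt_trans one_pos hd
  have h1 : IntegrableOn (fun u => d / Real.sqrt (Real.cosh u ^ 2 - d ^ 2)) (Ioc a (a+1)) := by
    have hbint : IntegrableOn
        (fun u => d / Real.sqrt (Real.sinh a / 2) * (u - a) ^ (-(1:ℝ)/2)) (Ioc a (a+1)) := by
      have h0 : IntervalIntegrable (fun u : ℝ => u ^ (-(1:ℝ)/2)) volume 0 1 :=
        intervalIntegral.intervalIntegrable_rpow' (by norm_num)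
      have h1 := (h0.comp_sub_right a).const_mul (d / Real.sqrt (Real.sinh a / 2))
      rw [intervalIntegrable_iff, uIoc_of_le (by linarith : (0:ℝ) + a ≤ 1 + a)] at h1
      have hset : Ioc a (a + 1) = Ioc (0 + a) (1 + a) := by rw [zero_add, add_comm 1 a]
      rw [hset]
      exact h1
    apply Integrable.mono' hbint
    · exact ((f_contOn hd).mono Ioc_subset_Ioi_self).aestronglyMeasurable measurableSet_Ioc
    · rw [ae_restrict_iff' measurableSet_Ioc]
      filter_upwards with u hu
      have hau : a < u := hu.1
      have hsub : 0 < u - a := by linarith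
      have hXpos := X_pos hd hau
      have hXlow := X_lower hd hau
      have hlow_pos : 0 < Real.sinh a / 2 * (u - a) := by positivity
      have hr : (u - a) ^ (-(1:ℝ)/2) = (Real.sqrt (u - a))⁻¹ := by
        rw [show (-(1:ℝ)/2) = -(1/2 : ℝ) by norm_num, Real.rpow_neg hsub.le,
          Real.sqrt_eq_rpow]
      rw [Real.norm_eq_abs, abs_of_nonneg (by positivity), hr]
      have heq : d / Real.sqrt (Real.sinh a / 2) * (Real.sqrt (u - a))⁻¹
          = d / Real.sqrt (Real.sinh a / 2 * (u - a)) := by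
        rw [Real.sqrt_mul (by positivity)]
        field_simp
      rw [heq]
      apply div_le_div_of_nonneg_left hd0.le (Real.sqrt_pos.2 hlow_pos)
      exact Real.sqrt_le_sqrt hXlow
  have h2 : IntegrableOn (fun u => d / Real.sqrt (Real.cosh u ^ 2 - d ^ 2)) (Ioi (a+1)) := by
    set c1 := Real.cosh 1 with hc1_def
    have hc1 : 1 < c1 := by
      have h : Real.cosh 0 < Real.cosh 1 := Real.cosh_lt_cosh.2 (by norm_num)
      rwa [Real.cosh_zero] at h
    have hs1 : 0 < Real.sqrt (c1 ^ 2 - 1) := Real.sqrt_pos.2 (by nlinarith)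
    have hbint : IntegrableOn
        (fun u => (2 * d * c1 / Real.sqrt (c1 ^ 2 - 1)) * Real.exp (-1 * u)) (Ioi (a+1)) :=
      (exp_neg_integrableOn_Ioi (a+1) one_pos).const_mul _
    apply Integrable.mono' hbint
    · exact ((f_contOn hd).mono (fun u hu => by
        simp only [mem_Ioi] at *; linarith)).aestronglyMeasurable measurableSet_Ioi
    · rw [ae_restrict_iff' measurableSet_Ioi]
      filter_upwards with u hu
      simp only [mem_Ioi] at hu
      have hau : a < u := by linarith
      have hXpos := X_pos hd hau
      have hcosh_ge : d * c1 ≤ Real.cosh u := by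
        have hmono : Real.cosh (a + 1) ≤ Real.cosh u := by
          rw [Real.cosh_le_cosh, abs_of_pos (by linarith), abs_of_pos (by linarith)]
          exact hu.le
        have hadd : Real.cosh (a + 1) = Real.cosh a * c1 + Real.sinh a * Real.sinh 1 :=
          Real.cosh_add a 1
        have hs1' : 0 ≤ Real.sinh 1 := Real.sinh_nonneg_iff.2 zero_le_one
        have hsa : 0 ≤ Real.sinh a := (Real.sinh_pos_iff.2 ha).le
        rw [← cosh_arccosh hd, ← ha_def]
        nlinarith [mul_nonneg hsa hs1']
      have hcoshpos : 0 < Real.cosh u := Real.cosh_pos u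
      have hXge : (Real.cosh u / c1) ^ 2 * (c1 ^ 2 - 1) ≤ Real.cosh u ^ 2 - d ^ 2 := by
        have hd2 : d ^ 2 ≤ (Real.cosh u / c1) ^ 2 := by
          rw [div_pow]
          rw [le_div_iff₀ (by positivity)]
          nlinarith [mul_le_mul hcosh_ge hcosh_ge (by positivity) hcoshpos.le]
        have hsq : (Real.cosh u / c1) ^ 2 * c1 ^ 2 = Real.cosh u ^ 2 := by
          field_simp
        nlinarith [hd2, hsq]
      have hsqrt_ge : Real.cosh u / c1 * Real.sqrt (c1 ^ 2 - 1)
          ≤ Real.sqrt (Real.cosh u ^ 2 - d ^ 2) := by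
        have := Real.sqrt_le_sqrt hXge
        rwa [Real.sqrt_mul (by positivity), Real.sqrt_sq (by positivity)] at this
      have hexp : Real.exp u / 2 ≤ Real.cosh u := by
        rw [Real.cosh_eq]
        have := (Real.exp_pos (-u)).le
        linarith
      rw [Real.norm_eq_abs, abs_of_nonneg (by positivity)]
      have step1 : d / Real.sqrt (Real.cosh u ^ 2 - d ^ 2)
          ≤ d / (Real.cosh u / c1 * Real.sqrt (c1 ^ 2 - 1)) := by
        apply div_le_div_of_nonneg_left hd0.le (by positivity) hsqrt_ge
      have step2 : d / (Real.cosh u / c1 * Real.sqrt (c1 ^ 2 - 1))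
          ≤ d / (Real.exp u / 2 / c1 * Real.sqrt (c1 ^ 2 - 1)) := by
        apply div_le_div_of_nonneg_left hd0.le (by positivity)
        have hnum : Real.exp u / 2 / c1 ≤ Real.cosh u / c1 :=
          (div_le_div_iff_of_pos_right (by positivity : (0:ℝ) < c1)).2 hexp
        exact mul_le_mul_of_nonneg_right hnum hs1.le
      have step3 : d / (Real.exp u / 2 / c1 * Real.sqrt (c1 ^ 2 - 1))
          = 2 * d * c1 / Real.sqrt (c1 ^ 2 - 1) * Real.exp (-1 * u) := by
        rw [show (-1 : ℝ) * u = -u by ring, Real.exp_neg]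
        field_simp
      linarith [step1, step2, step3.le, step3.ge]
  have hunion : Ioc a (a+1) ∪ Ioi (a+1) = Ioi a := Ioc_union_Ioi_eq_Ioi (by linarith)
  rw [← hunion]
  exact h1.union h2

lemma H_ge {d : ℝ} (hd : 1 < d) (hd2 : d < 5/4) :
    (Real.cosh 1)⁻¹ * (- Real.log (arccosh d)) ≤ H d := by
  set a := arccosh d with ha_def
  have ha : 0 < a := arccosh_pos hd
  have ha1 : a < 1 := arccosh_lt_one hd hd2
  have hd0 : (0:ℝ) < d := lt_trans one_pos hd
  have hc1 : (0:ℝ) < Real.cosh 1 := Real.cosh_pos 1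
  set f : ℝ → ℝ := fun u => d / Real.sqrt (Real.cosh u ^ 2 - d ^ 2) with hf_def
  have hfnn : ∀ u, 0 ≤ f u := fun u => by positivity
  have hint : IntegrableOn f (Ioi a) := f_integrable hd
  have step1 : ∫ u in Ioc a 1, f u ≤ H d := by
    rw [H]
    apply setIntegral_mono_set hint
    · exact Filter.Eventually.of_forall hfnn
    · exact (Ioc_subset_Ioi_self).eventuallyLE
  have hgint : IntegrableOn (fun u => (Real.cosh 1)⁻¹ * u⁻¹) (Ioc a 1) := by
    apply IntegrableOn.mono_set (t := Icc a 1) _ Ioc_subset_Icc_self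
    apply ContinuousOn.integrableOn_compact isCompact_Icc
    apply ContinuousOn.mul continuousOn_const
    exact ContinuousOn.inv₀ continuousOn_id (fun u hu => by
      have := hu.1; intro h; rw [h] at this; linarith)
  have step2 : ∫ u in Ioc a 1, (Real.cosh 1)⁻¹ * u⁻¹ ≤ ∫ u in Ioc a 1, f u := by
    apply setIntegral_mono_on hgint (hint.mono_set (fun u hu => hu.1)) measurableSet_Ioc
    intro u hu
    have hau : a < u := hu.1
    have hu0 : 0 < u := lt_trans ha hau
    have hXpos := X_pos hd hau
    have hXup := X_upper hd hu0 hu.2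
    have hsqrt_le : Real.sqrt (Real.cosh u ^ 2 - d ^ 2) ≤ Real.cosh 1 * u := by
      have := Real.sqrt_le_sqrt hXup
      rwa [Real.sqrt_sq (by positivity)] at this
    have h1 : (Real.cosh 1)⁻¹ * u⁻¹ = 1 / (Real.cosh 1 * u) := by
      field_simp
    rw [h1]
    calc 1 / (Real.cosh 1 * u) ≤ 1 / Real.sqrt (Real.cosh u ^ 2 - d ^ 2) :=
          one_div_le_one_div_of_le (Real.sqrt_pos.2 hXpos) hsqrt_le
      _ ≤ f u := by
          show 1 / Real.sqrt (Real.cosh u ^ 2 - d ^ 2) ≤ d / Real.sqrt (Real.cosh u ^ 2 - d ^ 2)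
          exact (div_le_div_iff_of_pos_right (Real.sqrt_pos.2 hXpos)).2 hd.le
  have step3 : ∫ u in Ioc a 1, (Real.cosh 1)⁻¹ * u⁻¹ = (Real.cosh 1)⁻¹ * (- Real.log a) := by
    rw [MeasureTheory.integral_const_mul]
    congr 1
    rw [← intervalIntegral.integral_of_le ha1.le, integral_inv_of_pos ha one_pos,
      one_div, Real.log_inv]
  linarith [step1, step2, step3.le, step3.ge]

/-- `H(d)` tends to `+∞` as `d → 1⁺`. -/
theorem H_tendsto_atTop :
    Filter.Tendsto H (nhdsWithin 1 (Set.Ioi 1)) Filter.atTop := by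
  have harccosh : Tendsto arccosh (nhdsWithin 1 (Set.Ioi 1)) (nhdsWithin 0 (Set.Ioi 0)) := by
    rw [tendsto_nhdsWithin_iff]
    constructor
    · have hc : ContinuousAt arccosh 1 := by
        have hinner : ContinuousAt (fun d : ℝ => d + Real.sqrt (d ^ 2 - 1)) 1 := by
          exact (continuous_id.add (Real.continuous_sqrt.comp (by continuity))).continuousAt
        have hval : (1 : ℝ) + Real.sqrt ((1:ℝ) ^ 2 - 1) = 1 := by norm_num
        have := (Real.continuousAt_log (by rw [hval]; norm_num)).comp hinner
        exact this
      have hval : arccosh 1 = 0 := by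
        rw [arccosh]; norm_num
      rw [← hval]
      exact hc.continuousWithinAt.tendsto
    · filter_upwards [self_mem_nhdsWithin] with d hd
      exact arccosh_pos hd
  have hlog : Tendsto (fun a : ℝ => -Real.log a) (nhdsWithin 0 (Set.Ioi 0)) atTop := by
    have h1 : Tendsto Real.log (nhdsWithin 0 (Set.Ioi 0)) atBot := by
      apply Real.tendsto_log_nhdsNE_zero.mono_left
      apply nhdsWithin_mono
      intro x hx
      exact ne_of_gt hx
    exact tendsto_neg_atBot_atTop.comp h1
  have hkey : Tendsto (fun d => (Real.cosh 1)⁻¹ * (-Real.log (arccosh d)))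
      (nhdsWithin 1 (Set.Ioi 1)) atTop := by
    apply Tendsto.const_mul_atTop (by positivity : (0:ℝ) < (Real.cosh 1)⁻¹)
    exact hlog.comp harccosh
  refine tendsto_atTop_mono' _ ?_ hkey
  have h54 : ∀ᶠ d in nhdsWithin (1:ℝ) (Set.Ioi 1), d < 5/4 :=
    Filter.Eventually.filter_mono nhdsWithin_le_nhds
      (gt_mem_nhds (by norm_num : (1:ℝ) < 5/4))
  filter_upwards [self_mem_nhdsWithin, h54] with d hd hd2
  exact H_ge hd hd2
end

section
/- The function H(d) = ∫_{arccosh(d)}^∞ d/√(cosh²(u) − d²) du, defined for d > 1, tends to π/2 as d → +∞. -/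
open Real MeasureTheory Set Filter

noncomputable def gfun (t : ℝ) : ℝ := 1 / Real.sqrt (Real.exp (2*t) - 1)

noncomputable def rfn (d : ℝ) : ℝ := Real.sqrt (1 - 1/d^2)

lemma gfun_nonneg (t : ℝ) : 0 ≤ gfun t := by
  unfold gfun; positivity

lemma Ffun_deriv {t : ℝ} (ht : 0 < t) :
    HasDerivAt (fun t => -Real.arcsin (Real.exp (-t))) (gfun t) t := by
  have h0 : (0:ℝ) < Real.exp (-t) := Real.exp_pos _
  have h1 : Real.exp (-t) < 1 := by
    rw [Real.exp_lt_one_iff]; linarith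
  have hexp : HasDerivAt (fun t : ℝ => Real.exp (-t)) (-Real.exp (-t)) t := by
    have := (hasDerivAt_neg t).exp
    simpa using this
  have harc := (Real.hasDerivAt_arcsin (by linarith) (ne_of_lt h1)).comp t hexp
  have := harc.neg
  refine this.congr_deriv ?_
  symm
  have he : (0:ℝ) < Real.exp (2*t) - 1 := by
    have : (1:ℝ) < Real.exp (2*t) := by
      rw [show (1:ℝ) = Real.exp 0 by simp]; exact Real.exp_lt_exp.2 (by linarith)
    linarith
  have hid : 1 - Real.exp (-t) ^ 2 = (Real.exp (2*t) - 1) * (Real.exp (-t))^2 := by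
    have h2 : Real.exp (2*t) * Real.exp (-t) ^ 2 = 1 := by
      rw [← Real.exp_nat_mul]
      push_cast
      rw [← Real.exp_add]
      norm_num
    nlinarith [h2]
  have key : Real.sqrt (1 - Real.exp (-t) ^ 2)
      = Real.sqrt (Real.exp (2*t) - 1) * Real.exp (-t) := by
    rw [hid, Real.sqrt_mul (le_of_lt he), Real.sqrt_sq (le_of_lt h0)]
  unfold gfun
  rw [key]
  have hs : (0:ℝ) < Real.sqrt (Real.exp (2*t) - 1) := Real.sqrt_pos.2 he
  field_simp

lemma Ffun_tendsto : Tendsto (fun t => -Real.arcsin (Real.exp (-t))) atTop (nhds 0) := by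
  have h1 : Tendsto (fun t : ℝ => Real.exp (-t)) atTop (nhds 0) := by
    exact Real.tendsto_exp_atBot.comp tendsto_neg_atTop_atBot
  have := (Real.continuous_arcsin.tendsto 0).comp h1
  rw [Real.arcsin_zero] at this
  simpa using this.neg

lemma gfun_integrableOn : IntegrableOn gfun (Ioi 0) :=
  integrableOn_Ioi_deriv_of_nonneg
    ((Real.continuous_arcsin.comp (Real.continuous_exp.comp continuous_neg)).neg.continuousWithinAt)
    (fun x hx => Ffun_deriv hx) (fun x _ => gfun_nonneg x) Ffun_tendsto

lemma gfun_integral : ∫ t in Ioi 0, gfun t = Real.pi / 2 := by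
  rw [integral_Ioi_of_hasDerivAt_of_nonneg
    ((Real.continuous_arcsin.comp (Real.continuous_exp.comp continuous_neg)).neg.continuousWithinAt)
    (fun x hx => Ffun_deriv hx) (fun x _ => gfun_nonneg x) Ffun_tendsto]
  simp [Real.arcsin_one]

lemma gfun_shift_integrableOn (a : ℝ) : IntegrableOn (fun u => gfun (u - a)) (Ioi a) := by
  have hmp : MeasurePreserving (fun t : ℝ => t + a) volume volume :=
    measurePreserving_add_right volume a
  have hemb : MeasurableEmbedding (fun t : ℝ => t + a) :=
    (MeasurableEquiv.addRight a).measurableEmbedding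
  have := (hmp.integrableOn_comp_preimage hemb (f := fun u => gfun (u - a)) (s := Ioi a))
  have hpre : (fun t : ℝ => t + a) ⁻¹' (Ioi a) = Ioi 0 := by
    ext x; simp [Set.mem_preimage]
  rw [hpre] at this
  exact this.1 (by simpa [Function.comp_def] using gfun_integrableOn)

lemma gfun_shift_integral (a : ℝ) : ∫ u in Ioi a, gfun (u - a) = Real.pi / 2 := by
  have hmp : MeasurePreserving (fun t : ℝ => t + a) volume volume :=
    measurePreserving_add_right volume a
  have hemb : MeasurableEmbedding (fun t : ℝ => t + a) :=
    (MeasurableEquiv.addRight a).measurableEmbedding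
  have := hmp.setIntegral_preimage_emb hemb (fun u => gfun (u - a)) (Ioi a)
  have hpre : (fun t : ℝ => t + a) ⁻¹' (Ioi a) = Ioi 0 := by
    ext x; simp [Set.mem_preimage]
  rw [hpre] at this
  rw [← this]
  simpa using gfun_integral

lemma arccosh_lemmas {d : ℝ} (hd : 1 < d) :
    Real.cosh (arccosh d) = d ∧ Real.sinh (arccosh d) = Real.sqrt (d^2-1) ∧
    Real.exp (arccosh d) = d + Real.sqrt (d^2-1) ∧ 0 < arccosh d := by
  have h1 : (0:ℝ) ≤ d^2 - 1 := by nlinarith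
  have hs : Real.sqrt (d^2-1) ^ 2 = d^2 - 1 := Real.sq_sqrt h1
  have hs0 : 0 ≤ Real.sqrt (d^2-1) := Real.sqrt_nonneg _
  have hx : (1:ℝ) < d + Real.sqrt (d^2-1) := by nlinarith
  have hx0 : (0:ℝ) < d + Real.sqrt (d^2-1) := by linarith
  have hinv : (d + Real.sqrt (d^2-1))⁻¹ = d - Real.sqrt (d^2-1) :=
    inv_eq_of_mul_eq_one_right (by nlinarith)
  refine ⟨?_, ?_, ?_, ?_⟩
  · rw [arccosh, Real.cosh_log hx0, hinv]; ring
  · rw [arccosh, Real.sinh_log hx0, hinv]; ring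
  · rw [arccosh, Real.exp_log hx0]
  · rw [arccosh]; exact Real.log_pos hx

lemma cosh_sq_sub {u a : ℝ} :
    Real.cosh u ^ 2 - Real.cosh a ^ 2 = Real.sinh (u - a) * Real.sinh (u + a) := by
  rw [Real.sinh_sub, Real.sinh_add]
  have h1 := Real.cosh_sq u
  have h2 := Real.cosh_sq a
  nlinarith [h1, h2]

-- upper bound on product:  sinh t * sinh (t + 2a) ≤ exp(2a)/4 * (exp(2t)-1), for t,a ≥ 0
lemma prod_upper {t a : ℝ} (ht : 0 ≤ t) (ha : 0 ≤ a) :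
    Real.sinh t * Real.sinh (t + 2*a) ≤ Real.exp (2*a) / 4 * (Real.exp (2*t) - 1) := by
  have hE : (1:ℝ) ≤ Real.exp t := Real.one_le_exp ht
  have hA : (1:ℝ) ≤ Real.exp (2*a) := Real.one_le_exp (by linarith)
  have e1 : Real.exp (t + 2*a) = Real.exp t * Real.exp (2*a) := Real.exp_add _ _
  have e2 : Real.exp (2*t) = Real.exp t * Real.exp t := by
    rw [two_mul, Real.exp_add]
  have e3 : Real.exp (-t) = (Real.exp t)⁻¹ := Real.exp_neg t
  have e4 : Real.exp (-(t + 2*a)) = (Real.exp t * Real.exp (2*a))⁻¹ := by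
    rw [Real.exp_neg, e1]
  rw [Real.sinh_eq, Real.sinh_eq, e1, e2, e3, e4]
  have hEp : (0:ℝ) < Real.exp t := Real.exp_pos _
  have hAp : (0:ℝ) < Real.exp (2*a) := Real.exp_pos _
  rw [div_mul_div_comm]
  have key : (Real.exp t - (Real.exp t)⁻¹) * (Real.exp t * Real.exp (2*a) - (Real.exp t * Real.exp (2*a))⁻¹)
      ≤ Real.exp (2*a) * (Real.exp t * Real.exp t - 1) := by
    have expand : (Real.exp t - (Real.exp t)⁻¹) * (Real.exp t * Real.exp (2*a) - (Real.exp t * Real.exp (2*a))⁻¹)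
        = Real.exp (2*a) * (Real.exp t * Real.exp t - 1)
          - (Real.exp (2*a))⁻¹ * (1 - (Real.exp t)⁻¹ * (Real.exp t)⁻¹) := by
      field_simp
    have hi1 : (Real.exp t)⁻¹ ≤ 1 := by
      rw [inv_le_one_iff₀]; right; exact hE
    have hnn : 0 ≤ (Real.exp (2*a))⁻¹ * (1 - (Real.exp t)⁻¹ * (Real.exp t)⁻¹) := by
      apply mul_nonneg (by positivity)
      nlinarith [inv_nonneg.2 (le_of_lt hEp)]
    linarith [expand.le, expand.ge]
  linarith [key]

lemma prod_lower {t a : ℝ} (ht : 0 ≤ t) (ha : 0 ≤ a) :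
    Real.sinh (2*a) / 2 * (Real.exp (2*t) - 1) ≤ Real.sinh t * Real.sinh (t + 2*a) := by
  have h1 : Real.sinh (t + 2*a) = Real.sinh t * Real.cosh (2*a) + Real.cosh t * Real.sinh (2*a) :=
    Real.sinh_add t (2*a)
  have hst : 0 ≤ Real.sinh t := Real.sinh_nonneg_iff.2 ht
  have hcs : Real.sinh (2*a) ≤ Real.cosh (2*a) := (Real.sinh_lt_cosh _).le
  have hse : Real.sinh t * Real.exp t = (Real.exp (2*t) - 1)/2 := by
    rw [Real.sinh_eq, Real.exp_neg]
    have hp := Real.exp_pos t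
    have e2 : Real.exp (2*t) = Real.exp t * Real.exp t := by rw [two_mul, Real.exp_add]
    field_simp [e2]
    rw [e2]; ring
  have hsc := Real.sinh_add_cosh t
  have heq : Real.sinh (2*a) / 2 * (Real.exp (2*t) - 1)
      = Real.sinh (2*a) * (Real.sinh t * (Real.sinh t + Real.cosh t)) := by
    rw [hsc, hse]; ring
  rw [heq, h1]
  nlinarith [mul_nonneg (mul_nonneg hst hst) (sub_nonneg.2 hcs)]

lemma bound_main {d : ℝ} (hd : 1 < d) {u : ℝ} (hu : arccosh d < u) :
    2*d/Real.exp (arccosh d) * gfun (u - arccosh d)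
      ≤ d / Real.sqrt (Real.cosh u ^ 2 - d ^ 2) ∧
    d / Real.sqrt (Real.cosh u ^ 2 - d ^ 2)
      ≤ d / Real.sqrt (Real.sinh (2 * arccosh d) / 2) * gfun (u - arccosh d) := by
  obtain ⟨hcosh, hsinh, hexp, hapos⟩ := arccosh_lemmas hd
  set a := arccosh d with ha
  set t := u - a with htdef
  have htpos : 0 < t := by simp [htdef]; linarith
  have hid : Real.cosh u ^ 2 - d ^ 2 = Real.sinh t * Real.sinh (t + 2*a) := by
    rw [← hcosh, cosh_sq_sub]
    congr 2
    ring
  have hd0 : (0:ℝ) < d := by linarith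
  have hEt : (1:ℝ) < Real.exp (2*t) := by
    rw [show (1:ℝ) = Real.exp 0 by simp]; exact Real.exp_lt_exp.2 (by linarith)
  have hgpos : 0 < Real.exp (2*t) - 1 := by linarith
  have hs2a : 0 < Real.sinh (2*a) := Real.sinh_pos_iff.2 (by linarith)
  have hlow := prod_lower (le_of_lt htpos) (le_of_lt hapos)
  have hupp := prod_upper (le_of_lt htpos) (le_of_lt hapos)
  have hprodpos : 0 < Real.sinh t * Real.sinh (t + 2*a) := by nlinarith
  constructor
  · -- lower bound
    rw [hid]
    have hsq : Real.sqrt (Real.sinh t * Real.sinh (t + 2*a))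
        ≤ Real.exp a / 2 * Real.sqrt (Real.exp (2*t) - 1) := by
      have : Real.exp a / 2 * Real.sqrt (Real.exp (2*t) - 1)
          = Real.sqrt (Real.exp (2*a) / 4 * (Real.exp (2*t) - 1)) := by
        rw [Real.sqrt_mul (by positivity)]
        congr 1
        rw [show Real.exp (2*a) / 4 = (Real.exp a / 2)^2 by
          rw [two_mul, Real.exp_add]; ring]
        rw [Real.sqrt_sq (by positivity)]
      rw [this]
      exact Real.sqrt_le_sqrt hupp
    have h1 : 0 < Real.sqrt (Real.sinh t * Real.sinh (t + 2*a)) := Real.sqrt_pos.2 hprodpos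
    have h2 : 0 < Real.sqrt (Real.exp (2*t) - 1) := Real.sqrt_pos.2 hgpos
    rw [gfun, div_mul_div_comm, div_le_div_iff₀ (by positivity) h1]
    have hstep : 2 * d * Real.sqrt (Real.sinh t * Real.sinh (t + 2*a))
        ≤ 2 * d * (Real.exp a / 2 * Real.sqrt (Real.exp (2*t) - 1)) :=
      mul_le_mul_of_nonneg_left hsq (by positivity)
    have hEa := Real.exp_pos a
    nlinarith [hstep]
  · -- upper bound
    rw [hid]
    have hsq : Real.sqrt (Real.sinh (2*a) / 2) * Real.sqrt (Real.exp (2*t) - 1)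
        ≤ Real.sqrt (Real.sinh t * Real.sinh (t + 2*a)) := by
      rw [← Real.sqrt_mul (by positivity)]
      exact Real.sqrt_le_sqrt hlow
    have h1 : 0 < Real.sqrt (Real.sinh t * Real.sinh (t + 2*a)) := Real.sqrt_pos.2 hprodpos
    have h2 : 0 < Real.sqrt (Real.exp (2*t) - 1) := Real.sqrt_pos.2 hgpos
    have h3 : 0 < Real.sqrt (Real.sinh (2*a) / 2) := Real.sqrt_pos.2 (by positivity)
    rw [gfun, div_mul_div_comm, div_le_div_iff₀ h1 (by positivity)]
    nlinarith [mul_le_mul_of_nonneg_left hsq (le_of_lt hd0)]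

lemma H_bounds {d : ℝ} (hd : 1 < d) :
    2*d/Real.exp (arccosh d) * (Real.pi/2) ≤ H d ∧
    H d ≤ d / Real.sqrt (Real.sinh (2*arccosh d)/2) * (Real.pi/2) := by
  set a := arccosh d with ha
  set f : ℝ → ℝ := fun u => d / Real.sqrt (Real.cosh u ^ 2 - d ^ 2) with hf
  have hd0 : (0:ℝ) < d := by linarith
  have hmeas : AEStronglyMeasurable f (volume.restrict (Ioi a)) := by
    apply Measurable.aestronglyMeasurable
    apply Measurable.div measurable_const
    exact Real.continuous_sqrt.measurable.comp
      ((Real.continuous_cosh.measurable.pow_const 2).sub measurable_const)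
  have hupint : Integrable (fun u => d / Real.sqrt (Real.sinh (2*a)/2) * gfun (u - a))
      (volume.restrict (Ioi a)) := (gfun_shift_integrableOn a).const_mul _
  have hloint : Integrable (fun u => 2*d/Real.exp a * gfun (u - a))
      (volume.restrict (Ioi a)) := (gfun_shift_integrableOn a).const_mul _
  have hbound : ∀ᵐ u ∂(volume.restrict (Ioi a)),
      ‖f u‖ ≤ d / Real.sqrt (Real.sinh (2*a)/2) * gfun (u - a) := by
    rw [ae_restrict_iff' measurableSet_Ioi]
    filter_upwards with u hu
    have hfornn : 0 ≤ f u := by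
      rw [hf]; positivity
    rw [Real.norm_eq_abs, abs_of_nonneg hfornn]
    exact (bound_main hd hu).2
  have hfint : IntegrableOn f (Ioi a) := hupint.mono' hmeas hbound
  have hH : H d = ∫ u in Ioi a, f u := rfl
  constructor
  · rw [hH, ← gfun_shift_integral a, ← MeasureTheory.integral_const_mul]
    exact setIntegral_mono_on hloint hfint measurableSet_Ioi
      (fun u hu => (bound_main hd hu).1)
  · rw [hH, ← gfun_shift_integral a, ← MeasureTheory.integral_const_mul]
    exact setIntegral_mono_on hfint hupint measurableSet_Ioi
      (fun u hu => (bound_main hd hu).2)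

lemma rfn_tendsto : Tendsto rfn atTop (nhds 1) := by
  have h0 : Tendsto (fun d : ℝ => 1 - 1/d^2) atTop (nhds 1) := by
    have h1 : Tendsto (fun d : ℝ => 1/d^2) atTop (nhds 0) := by
      simp only [one_div]
      exact (tendsto_pow_atTop (two_ne_zero)).inv_tendsto_atTop
    simpa using tendsto_const_nhds.sub h1
  have h2 := (Real.continuous_sqrt.tendsto 1).comp h0
  rw [Real.sqrt_one] at h2
  exact h2

lemma rfn_eq {d : ℝ} (hd : 1 < d) : rfn d = Real.sqrt (d^2 - 1) / d := by
  have hd0 : (0:ℝ) < d := by linarith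
  rw [rfn, show (1 - 1/d^2) = (d^2-1)/d^2 by field_simp, Real.sqrt_div (by nlinarith),
    Real.sqrt_sq (le_of_lt hd0)]

/-- `H(d)` tends to `π/2` as `d → +∞`. -/
theorem H_tendsto_pi_div_two :
    Filter.Tendsto H Filter.atTop (nhds (Real.pi / 2)) := by
  have hlo : Tendsto (fun d => Real.pi / (1 + rfn d)) atTop (nhds (Real.pi/2)) := by
    have h2 : Tendsto (fun d => 1 + rfn d) atTop (nhds 2) := by
      have := tendsto_const_nhds.add rfn_tendsto (f := fun _ : ℝ => (1:ℝ))
      norm_num at this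
      exact this
    have := Filter.Tendsto.div (tendsto_const_nhds (x := Real.pi)) h2 two_ne_zero
    simpa [Pi.div_def] using this
  have hhi : Tendsto (fun d => (Real.pi/2) / Real.sqrt (rfn d)) atTop (nhds (Real.pi/2)) := by
    have h2 : Tendsto (fun d => Real.sqrt (rfn d)) atTop (nhds 1) := by
      have := (Real.continuous_sqrt.tendsto 1).comp rfn_tendsto
      simpa [Function.comp_def] using this
    have := Filter.Tendsto.div (tendsto_const_nhds (x := Real.pi/2)) h2 one_ne_zero
    simpa [Pi.div_def] using this
  apply tendsto_of_tendsto_of_tendsto_of_le_of_le' hlo hhi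
  · -- lower eventual bound
    filter_upwards [eventually_gt_atTop (1:ℝ)] with d hd
    obtain ⟨hcosh, hsinh, hexp, hapos⟩ := arccosh_lemmas hd
    have hd0 : (0:ℝ) < d := by linarith
    have hb := (H_bounds hd).1
    have hs0 : (0:ℝ) ≤ Real.sqrt (d^2-1) := Real.sqrt_nonneg _
    have heq : Real.pi / (1 + rfn d) = 2*d/Real.exp (arccosh d) * (Real.pi/2) := by
      rw [rfn_eq hd, hexp]
      have h1 : d + Real.sqrt (d^2-1) ≠ 0 := by positivity
      field_simp
    rw [heq]; exact hb
  · -- upper eventual bound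
    filter_upwards [eventually_gt_atTop (1:ℝ)] with d hd
    obtain ⟨hcosh, hsinh, hexp, hapos⟩ := arccosh_lemmas hd
    have hd0 : (0:ℝ) < d := by linarith
    have hb := (H_bounds hd).2
    have hsp : (0:ℝ) < Real.sqrt (d^2-1) := Real.sqrt_pos.2 (by nlinarith)
    have hsinh2 : Real.sinh (2*arccosh d) / 2 = Real.sqrt (d^2-1) * d := by
      rw [Real.sinh_two_mul, hcosh, hsinh]; ring
    have heq : (Real.pi/2) / Real.sqrt (rfn d)
        = d / Real.sqrt (Real.sinh (2*arccosh d)/2) * (Real.pi/2) := by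
      rw [hsinh2, rfn_eq hd]
      have h1 : Real.sqrt (Real.sqrt (d^2-1) / d)
          = Real.sqrt (Real.sqrt (d^2-1)) / Real.sqrt d := Real.sqrt_div (le_of_lt hsp) d
      have h2 : Real.sqrt (Real.sqrt (d^2-1) * d)
          = Real.sqrt (Real.sqrt (d^2-1)) * Real.sqrt d := Real.sqrt_mul (le_of_lt hsp) d
      rw [h1, h2]
      have hsd : Real.sqrt d * Real.sqrt d = d := Real.mul_self_sqrt (le_of_lt hd0)
      have hsdp : (0:ℝ) < Real.sqrt d := Real.sqrt_pos.2 hd0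
      have hssp : (0:ℝ) < Real.sqrt (Real.sqrt (d^2-1)) := Real.sqrt_pos.2 hsp
      field_simp
      linear_combination hsd
    rw [heq]; exact hb
end
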